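/- arXiv:2101.02418 — 6 statements merged into one kernel-verified Lean document; each statement's English description precedes it below -/
import Mathlib

section
/- The fully invariant congruence FIC{(x³, x²), (x²y, xyx), (xyx, yx²)} on F equals the fully invariant congruence FIC{(x³yz, yxzx)} generated by the single pair (x³yz, yxzx). (Equivalently: the monoid variety D = var{x² ≈ x³, x²y ≈ xyx ≈ yx²} can be defined by the single identity x³yz ≈ yxzx.) -/
/-- The free monoid on countably many generators. -/
abbrev F : Type := FreeMonoid ℕ

/-- The fixed pairwise distinct generators. -/
def x : F := FreeMonoid.of 0
def y : F := FreeMonoid.of 1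
def z : F := FreeMonoid.of 2
def t : F := FreeMonoid.of 3

/-- A congruence on `F` is fully invariant if it is stable under every
monoid endomorphism of `F`. -/
def IsFullyInvariant (c : Con F) : Prop :=
  ∀ ξ : F →* F, ∀ u v : F, c u v → c (ξ u) (ξ v)

/-- The type of fully invariant congruences on `F`. -/
abbrev FICon : Type := {c : Con F // IsFullyInvariant c}

instance : InfSet FICon :=
  ⟨fun S => ⟨sInf (Subtype.val '' S), fun ξ u v h c hc => by
    obtain ⟨d, hd, rfl⟩ := hc
    exact d.2 ξ u v (h d.1 ⟨d, hd, rfl⟩)⟩⟩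

/-- The complete lattice of fully invariant congruences on `F`:
meets are intersections, joins are the smallest fully invariant congruences
containing the union, `⊥` is the equality relation and `⊤` is the all relation. -/
noncomputable instance : CompleteLattice FICon :=
  completeLatticeOfInf FICon (fun S =>
    ⟨fun c hc => fun u v h => h c.1 ⟨c, hc, rfl⟩,
     fun c hc => fun u v h d hd => by
        obtain ⟨e, he, rfl⟩ := hd
        exact hc he h⟩)

/-- `fic S` is the smallest fully invariant congruence on `F` containing the
set `S` of pairs of words. -/
noncomputable def fic (S : Set (F × F)) : FICon :=
  sInf {c : FICon | ∀ p ∈ S, c.1 p.1 p.2}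

lemma mem_fic {S : Set (F × F)} {u v : F} (h : (u, v) ∈ S) : (fic S).1 u v := by
  intro d hd
  obtain ⟨e, he, rfl⟩ := hd
  exact he (u, v) h

lemma fic_le {S : Set (F × F)} {c : FICon} (h : ∀ p ∈ S, c.1 p.1 p.2) : fic S ≤ c :=
  sInf_le h

lemma derive_single (c : Con F) (hc : IsFullyInvariant c)
    (h1 : c (x ^ 3) (x ^ 2)) (h2 : c (x ^ 2 * y) (x * y * x))
    (h3 : c (x * y * x) (y * x ^ 2)) : c (x ^ 3 * y * z) (y * x * z * x) := by
  have h23 : c (x ^ 2 * y) (y * x ^ 2) := c.trans h2 h3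
  have hz : c (x ^ 2 * z) (x * z * x) := by
    have := hc (FreeMonoid.lift (fun n => if n = 1 then z else x)) _ _ h2
    simpa [x, y, z, map_mul, map_pow] using this
  have s1 : c (x ^ 3 * y * z) (x ^ 2 * y * z) := c.mul (c.mul h1 (c.refl y)) (c.refl z)
  have s2 : c (x ^ 2 * y * z) (y * x ^ 2 * z) := c.mul h23 (c.refl z)
  have s3 : c (y * x ^ 2 * z) (y * (x * z * x)) := by
    have := c.mul (c.refl y) hz
    simpa [mul_assoc] using this
  have := c.trans (c.trans s1 s2) s3
  simpa [mul_assoc] using this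

lemma derive_D (c : Con F) (hc : IsFullyInvariant c)
    (h : c (x ^ 3 * y * z) (y * x * z * x)) :
    c (x ^ 3) (x ^ 2) ∧ c (x ^ 2 * y) (x * y * x) ∧ c (x * y * x) (y * x ^ 2) := by
  have e1 : c (x ^ 3) (x ^ 2) := by
    have := hc (FreeMonoid.lift (fun n => if n = 0 then x else 1)) _ _ h
    simpa [x, y, z, map_mul, map_pow, pow_succ] using this
  have e2 : c (x ^ 3 * y) (y * x ^ 2) := by
    have := hc (FreeMonoid.lift (fun n => if n = 2 then 1 else FreeMonoid.of n)) _ _ h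
    simpa [x, y, z, map_mul, map_pow, pow_succ, mul_assoc] using this
  have e3 : c (x ^ 3 * y) (x * y * x) := by
    have := hc (FreeMonoid.lift (fun n => if n = 0 then x else if n = 2 then y else 1)) _ _ h
    simpa [x, y, z, map_mul, map_pow, pow_succ, mul_assoc] using this
  have e4 : c (x ^ 2 * y) (x ^ 3 * y) := c.symm (c.mul e1 (c.refl y))
  exact ⟨e1, c.trans e4 e3, c.trans (c.symm e3) e2⟩

/-- The monoid variety `D = var{x² ≈ x³, x²y ≈ xyx ≈ yx²}` can be defined by
the single identity `x³yz ≈ yxzx`: the corresponding fully invariant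
congruences on `F` coincide. -/
theorem sigmaD_eq_single :
    fic {(x ^ 3, x ^ 2), (x ^ 2 * y, x * y * x), (x * y * x, y * x ^ 2)} =
      fic {(x ^ 3 * y * z, y * x * z * x)} := by
  apply le_antisymm
  · apply fic_le
    have hs := mem_fic (S := {(x ^ 3 * y * z, y * x * z * x)}) (u := x ^ 3 * y * z)
      (v := y * x * z * x) rfl
    have hd := derive_D _ (fic {(x ^ 3 * y * z, y * x * z * x)}).2 hs
    rintro p hp
    simp only [Set.mem_insert_iff, Set.mem_singleton_iff] at hp
    rcases hp with rfl | rfl | rfl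
    · exact hd.1
    · exact hd.2.1
    · exact hd.2.2
  · apply fic_le
    rintro p hp
    simp only [Set.mem_singleton_iff] at hp
    subst hp
    exact derive_single _ (fic _).2
      (mem_fic (by simp)) (mem_fic (by simp)) (mem_fic (by simp))
end

section
/- The fully invariant congruences on F that contain σ_D are exactly σ_D, σ_C2, σ_SL and ⊤, and these four are pairwise distinct with σ_D ⊊ σ_C2 ⊊ σ_SL ⊊ ⊤. (Equivalently: the subvariety lattice of the monoid variety D is the four-element chain T ⊂ SL ⊂ C2 ⊂ D.) -/
noncomputable def sigmaSL : FICon := fic {(x ^ 2, x), (x * y, y * x)}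

noncomputable def sigmaC2 : FICon := fic {(x ^ 3, x ^ 2), (x * y, y * x)}

noncomputable def sigmaD : FICon :=
  fic {(x ^ 3, x ^ 2), (x ^ 2 * y, x * y * x), (x * y * x, y * x ^ 2)}

namespace SubD


lemma fic_contains (S : Set (F × F)) {p : F × F} (hp : p ∈ S) : (fic S).1 p.1 p.2 := by
  intro c hc
  obtain ⟨d, hd, rfl⟩ := hc
  exact hd p hp

lemma fic_le {S : Set (F × F)} {c : FICon} (h : ∀ p ∈ S, c.1 p.1 p.2) : fic S ≤ c :=
  sInf_le h

lemma ficon_le_iff {c d : FICon} : c ≤ d ↔ c.1 ≤ d.1 := Iff.rfl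

lemma eq_top {c : FICon} (hc : ∀ u v : F, c.1 u v) : c = ⊤ := by
  refine le_antisymm le_top ?_
  show (⊤ : FICon).1 ≤ c.1
  intro u v _
  exact hc u v

lemma top_rel (u v : F) : (⊤ : FICon).1 u v := by
  have : (⟨⊤, fun _ _ _ _ => trivial⟩ : FICon) = ⊤ :=
    eq_top (fun _ _ => trivial)
  rw [← this]
  trivial




def conOf (M : Type) [Monoid M] : Con F where
  r u v := ∀ φ : F →* M, φ u = φ v
  iseqv := ⟨fun _ _ => rfl, fun h φ => (h φ).symm, fun h1 h2 φ => (h1 φ).trans (h2 φ)⟩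
  mul' := fun h1 h2 φ => by rw [map_mul, map_mul, h1 φ, h2 φ]

lemma conOf_fi (M : Type) [Monoid M] : IsFullyInvariant (conOf M) :=
  fun ξ u v h φ => h (φ.comp ξ)

-- two-element semilattice model
inductive MSL where | e | a deriving DecidableEq
instance : Fintype MSL := ⟨⟨{.e, .a}, by decide⟩, by intro m; cases m <;> decide⟩
instance : Monoid MSL where
  one := .e
  mul m n := match m, n with | .e, n => n | .a, _ => .a
  one_mul := by decide
  mul_one := by decide
  mul_assoc := by decide

-- three-element model of C2
inductive MC2 where | e | a | a2 deriving DecidableEq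
instance : Fintype MC2 := ⟨⟨{.e, .a, .a2}, by decide⟩, by intro m; cases m <;> decide⟩
instance : Monoid MC2 where
  one := .e
  mul m n := match m, n with
    | .e, n => n | m, .e => m | _, _ => .a2
  one_mul := by decide
  mul_one := by decide
  mul_assoc := by decide

-- ten-element model of D (free D-monoid on two generators)
inductive MD where | e | A | B | AB | BA | A2 | B2 | A2B | AB2 | A2B2
  deriving DecidableEq

namespace MD
def tr : MD → ℕ × ℕ × Bool
  | .e => (0,0,false) | .A => (1,0,false) | .B => (0,1,false)
  | .AB => (1,1,false) | .BA => (1,1,true) | .A2 => (2,0,false)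
  | .B2 => (0,2,false) | .A2B => (2,1,false) | .AB2 => (1,2,false)
  | .A2B2 => (2,2,false)

def untr : ℕ × ℕ × Bool → MD := fun (p, q, f) =>
  match min p 2, min q 2 with
  | 0, 0 => .e | 1, 0 => .A | 0, 1 => .B
  | 1, 1 => if f then .BA else .AB
  | 2, 0 => .A2 | 0, 2 => .B2 | 2, 1 => .A2B | 1, 2 => .AB2
  | _, _ => .A2B2

def mul (m n : MD) : MD :=
  let a := tr m
  let b := tr n
  untr (a.1 + b.1, a.2.1 + b.2.1,
    if a.1 + b.1 = 1 ∧ a.2.1 + b.2.1 = 1 then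
      (if a.1 = 1 ∧ b.2.1 = 1 then false
       else if a.2.1 = 1 ∧ b.1 = 1 then true
       else if a.1 = 1 ∨ a.2.1 = 1 then a.2.2 else b.2.2)
    else false)

instance : Fintype MD :=
  ⟨⟨{.e, .A, .B, .AB, .BA, .A2, .B2, .A2B, .AB2, .A2B2}, by decide⟩, by intro m; cases m <;> decide⟩

instance : Monoid MD where
  one := .e
  mul := MD.mul
  one_mul := by decide
  mul_one := by decide
  mul_assoc := by decide

lemma id1 : ∀ m : MD, m * m * m = m * m := by decide
lemma id2 : ∀ m n : MD, m * m * n = m * n * m := by decide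
lemma id3 : ∀ m n : MD, m * n * m = n * (m * m) := by decide
lemma abne : MD.A * MD.B ≠ MD.B * MD.A := by decide

end MD


open FreeMonoid

abbrev ofl (l : List ℕ) : F := FreeMonoid.ofList l

section Derived
variable {c : Con F} (hfi : IsFullyInvariant c)
include hfi

def sub2 (u v : F) : F →* F :=
  FreeMonoid.lift (fun n => if n = 0 then u else if n = 1 then v else 1)

omit hfi in
lemma sub2_x (u v : F) : sub2 u v x = u := rfl
omit hfi in
lemma sub2_y (u v : F) : sub2 u v y = v := rfl

-- from x^3 = x^2
lemma d1 (hx3 : c (x^3) (x^2)) : ∀ u : F, c (u^3) (u^2) := by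
  intro u
  have h := hfi (sub2 u 1) _ _ hx3
  simpa [map_pow, sub2_x] using h

-- from x^2 = x  (for SL)
lemma d1SL (hx2 : c (x^2) x) : ∀ u : F, c (u^2) u := by
  intro u
  have h := hfi (sub2 u 1) _ _ hx2
  simpa [map_pow, sub2_x] using h

lemma d2 (hx2y : c (x^2*y) (x*y*x)) : ∀ u v : F, c (u^2*v) (u*v*u) := by
  intro u v
  have h := hfi (sub2 u v) _ _ hx2y
  simpa [map_mul, map_pow, sub2_x, sub2_y] using h

lemma d3 (hxyx : c (x*y*x) (y*x^2)) : ∀ u v : F, c (u*v*u) (v*u^2) := by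
  intro u v
  have h := hfi (sub2 u v) _ _ hxyx
  simpa [map_mul, map_pow, sub2_x, sub2_y] using h

lemma dcomm (hxy : c (x*y) (y*x)) : ∀ u v : F, c (u*v) (v*u) := by
  intro u v
  have h := hfi (sub2 u v) _ _ hxy
  simpa [map_mul, sub2_x, sub2_y] using h

lemma dc (hx2y : c (x^2*y) (x*y*x)) (hxyx : c (x*y*x) (y*x^2)) :
    ∀ u v : F, c (u^2*v) (v*u^2) :=
  fun u v => c.trans (d2 hfi hx2y u v) (d3 hfi hxyx u v)

end Derived

-- list-level relation
def LC (c : Con F) (l m : List ℕ) : Prop := c (ofl l) (ofl m)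

section LCBasic
variable {c : Con F}

lemma LC.refl (l : List ℕ) : LC c l l := c.refl _
lemma LC.symm {l m} (h : LC c l m) : LC c m l := c.symm h
lemma LC.trans {l m k} (h1 : LC c l m) (h2 : LC c m k) : LC c l k := c.trans h1 h2
lemma LC.mul {l₁ l₂ m₁ m₂} (h1 : LC c l₁ l₂) (h2 : LC c m₁ m₂) :
    LC c (l₁ ++ m₁) (l₂ ++ m₂) := c.mul h1 h2
lemma LC.cons (a : ℕ) {l m} (h : LC c l m) : LC c (a :: l) (a :: m) :=
  LC.mul (LC.refl [a]) h
end LCBasic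

section ListCalc
variable {c : Con F} (hfi : IsFullyInvariant c)
include hfi

-- triple-letter reduction:  aaa ~ aa (needs x³=x²)
lemma L1 (hx3 : c (x^3) (x^2)) (a : ℕ) (l : List ℕ) :
    LC c (a::a::a::l) (a::a::l) :=
  c.mul (d1 hfi hx3 (of a)) (c.refl (ofl l))

-- aa·q ~ a·q·a
lemma L2 (hx2y : c (x^2*y) (x*y*x)) (a : ℕ) (q : List ℕ) :
    LC c (a::a::q) (a::(q++[a])) := by
  have h := d2 hfi hx2y (of a) (ofl q)
  have e1 : (of a)^2 * ofl q = ofl (a::a::q) := rfl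
  have e2 : of a * ofl q * of a = ofl (a::(q++[a])) := by
    show ofl ([a] ++ q ++ [a]) = _
    simp [List.append_assoc]
  rwa [e1, e2] at h

-- squares are central: aa·l ~ l·aa
lemma Lc (hx2y : c (x^2*y) (x*y*x)) (hxyx : c (x*y*x) (y*x^2)) (a : ℕ) (l : List ℕ) :
    LC c (a::a::l) (l++[a,a]) := by
  have h := dc hfi hx2y hxyx (of a) (ofl l)
  exact h

-- single-letter square reduction for SL:  aa·l ~ a·l
lemma L1SL (hx2 : c (x^2) x) (a : ℕ) (l : List ℕ) :
    LC c (a::a::l) (a::l) :=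
  c.mul (d1SL hfi hx2 (of a)) (c.refl (ofl l))

end ListCalc

section Extract
variable {c : Con F} (hfi : IsFullyInvariant c)
  (hx3 : c (x^3) (x^2)) (hx2y : c (x^2*y) (x*y*x)) (hxyx : c (x*y*x) (y*x^2))
include hfi hx3 hx2y hxyx

lemma absorb (a : ℕ) : ∀ v : List ℕ, LC c (a::a::v) (a::a::(v.filter (· ≠ a)))
  | [] => LC.refl _
  | b :: v => by
    by_cases hb : b = a
    · subst hb
      have h1 : LC c (b::b::b::v) (b::b::v) := L1 hfi hx3 b v
      have h2 := absorb b v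
      simpa using h1.trans h2
    · have e : (b::v).filter (· ≠ a) = b :: v.filter (· ≠ a) := by
        simp [List.filter_cons, hb]
      rw [e]
      have s1 : LC c (a::a::[b]) ([b]++[a,a]) := Lc hfi hx2y hxyx a [b]
      have t1 : LC c (a::a::b::v) (b::a::a::v) := LC.mul s1 (LC.refl v)
      have t2 : LC c (b::a::a::v) (b::a::a::(v.filter (· ≠ a))) :=
        LC.cons b (absorb a v)
      have t3 : LC c (b::a::a::(v.filter (· ≠ a))) (a::a::b::(v.filter (· ≠ a))) :=
        LC.mul s1.symm (LC.refl (v.filter (· ≠ a)))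
      exact (t1.trans t2).trans t3

omit hfi hx3 hx2y hxyx in
lemma split2 {a : ℕ} : ∀ {w : List ℕ}, 2 ≤ w.count a →
    ∃ p q r, w = p ++ a :: (q ++ a :: r) := by
  intro w
  induction w with
  | nil => simp
  | cons b w ih =>
    intro hw
    by_cases hb : b = a
    · subst hb
      have h1 : 1 ≤ w.count b := by
        have := List.count_cons_self (a := b) (l := w)
        omega
    
      obtain ⟨q, r, rfl⟩ := List.append_of_mem (List.count_pos_iff.mp h1)
      exact ⟨[], q, r, rfl⟩
    · have : 2 ≤ w.count a := by
        simp [List.count_cons, hb] at hw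
        exact hw
      obtain ⟨p, q, r, rfl⟩ := ih this
      exact ⟨b::p, q, r, rfl⟩

lemma extract {a : ℕ} {w : List ℕ} (hw : 2 ≤ w.count a) :
    LC c w (a::a::(w.filter (· ≠ a))) := by
  obtain ⟨p, q, r, rfl⟩ := split2 hw
  -- step 1: inside: a::(q ++ a::r) ~ a::a::(q++r)
  have s1 : LC c (a::a::q) (a::(q++[a])) := L2 hfi hx2y a q
  have t1 : LC c ((a::(q++[a])) ++ r) ((a::a::q) ++ r) := LC.mul s1.symm (LC.refl r)
  have e1 : (a::(q++[a])) ++ r = a :: (q ++ a :: r) := by simp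
  rw [e1] at t1
  have t2 : LC c (p ++ a :: (q ++ a :: r)) (p ++ (a::a::(q++r))) := by
    have := LC.mul (LC.refl p) t1
    simpa using this
  -- step 2: move [a,a] to the front
  have s2 : LC c (a::a::p) (p++[a,a]) := Lc hfi hx2y hxyx a p
  have t3 : LC c ((p++[a,a]) ++ (q++r)) ((a::a::p) ++ (q++r)) :=
    LC.mul s2.symm (LC.refl (q++r))
  have e2 : (p++[a,a]) ++ (q++r) = p ++ (a::a::(q++r)) := by simp
  have e3 : (a::a::p) ++ (q++r) = a::a::(p++(q++r)) := by simp
  rw [e2, e3] at t3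
  -- step 3: absorb remaining copies of a
  have t4 := absorb hfi hx3 hx2y hxyx a (p++(q++r))
  have e4 : (p ++ (q ++ r)).filter (· ≠ a) = (p ++ a :: (q ++ a :: r)).filter (· ≠ a) := by
    simp [List.filter_append, List.filter_cons]
  rw [e4] at t4
  exact (t2.trans t3).trans t4

end Extract

-- ===== invariants =====
def onceL (w : List ℕ) : List ℕ := w.filter (fun b => w.count b = 1)
def twosF (w : List ℕ) : Finset ℕ := w.toFinset.filter (fun b => 2 ≤ w.count b)
def nfD (w : List ℕ) : List ℕ :=
  ((twosF w).sort (·≤·)).flatMap (fun b => [b,b]) ++ onceL w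
def ccnt (w : List ℕ) : ℕ → ℕ := fun b => min (w.count b) 2

lemma count_filter_ne (w : List ℕ) (a b : ℕ) :
    (w.filter (· ≠ a)).count b = if b = a then 0 else w.count b := by
  by_cases hb : b = a
  · subst hb
    simp [List.count_eq_zero, List.mem_filter]
  · rw [if_neg hb, List.count_filter]
    simp [hb]

lemma onceL_filter {w : List ℕ} {a : ℕ} (ha : 2 ≤ w.count a) :
    onceL (w.filter (· ≠ a)) = onceL w := by
  unfold onceL
  rw [List.filter_filter]
  apply List.filter_congr
  intro b hb
  by_cases hba : b = a
  · subst hba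
    simp [count_filter_ne]
    omega
  · simp [hba, count_filter_ne, w.count_filter]

lemma twosF_filter {w : List ℕ} {a : ℕ} :
    twosF (w.filter (· ≠ a)) = (twosF w).erase a := by
  ext b
  simp only [twosF, Finset.mem_filter, Finset.mem_erase, List.mem_toFinset, List.mem_filter,
    count_filter_ne]
  by_cases hba : b = a
  · subst hba; simp
  · simp [hba]

lemma mem_twosF {w : List ℕ} {a : ℕ} : a ∈ twosF w ↔ 2 ≤ w.count a := by
  simp only [twosF, Finset.mem_filter, List.mem_toFinset]
  constructor
  · exact fun h => h.2
  · intro h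
    exact ⟨List.count_pos_iff.mp (by omega), h⟩

lemma nfD_cons_min {w : List ℕ} {a : ℕ} (hne : (twosF w).Nonempty)
    (hmin : a = (twosF w).min' hne) :
    nfD w = a :: a :: nfD (w.filter (· ≠ a)) := by
  have hamem : a ∈ twosF w := hmin ▸ (twosF w).min'_mem hne
  have ha2 : 2 ≤ w.count a := mem_twosF.mp hamem
  have hsort : (twosF w).sort (·≤·) = a :: ((twosF w).erase a).sort (·≤·) := by
    conv_lhs => rw [← Finset.insert_erase hamem]
    rw [Finset.sort_insert]
    · intro b hb
      exact hmin ▸ (twosF w).min'_le b (Finset.mem_of_mem_erase hb)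
    · exact Finset.notMem_erase a _
  unfold nfD
  rw [hsort, twosF_filter, onceL_filter ha2, List.flatMap_cons]
  rfl

lemma nfD_eq_self {w : List ℕ} (h : twosF w = ∅) : nfD w = w := by
  unfold nfD
  rw [h, Finset.sort_empty]
  simp only [List.flatMap_nil, List.nil_append]
  unfold onceL
  apply List.filter_eq_self.mpr
  intro b hb
  have h1 : 1 ≤ w.count b := List.count_pos_iff.mpr hb
  have h2 : ¬ 2 ≤ w.count b := fun h2 => by
    have : b ∈ (∅ : Finset ℕ) := h ▸ mem_twosF.mpr h2
    simp at this
  simp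
  omega

section NormD
variable {c : Con F} (hfi : IsFullyInvariant c)
  (hx3 : c (x^3) (x^2)) (hx2y : c (x^2*y) (x*y*x)) (hxyx : c (x*y*x) (y*x^2))
include hfi hx3 hx2y hxyx

lemma normD : ∀ (n : ℕ) (w : List ℕ), w.length ≤ n → LC c w (nfD w) := by
  intro n
  induction n with
  | zero =>
    intro w hw
    have hw0 : w = [] := List.length_eq_zero_iff.mp (by omega)
    subst hw0
    have h0 : twosF ([] : List ℕ) = ∅ := by decide
    rw [nfD_eq_self h0]
    exact LC.refl _
  | succ n ih =>
    intro w hw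
    by_cases h : twosF w = ∅
    · rw [nfD_eq_self h]; exact LC.refl _
    · have hne : (twosF w).Nonempty := Finset.nonempty_iff_ne_empty.mpr h
      set a := (twosF w).min' hne with hmin
      have ha2 : 2 ≤ w.count a := mem_twosF.mp ((twosF w).min'_mem hne)
      have hlen : (w.filter (· ≠ a)).length < w.length := by
        apply List.length_filter_lt_length_iff_exists.mpr
        exact ⟨a, List.count_pos_iff.mp (by omega), by simp⟩
      have t1 : LC c w (a::a::(w.filter (· ≠ a))) := extract hfi hx3 hx2y hxyx ha2
      have t2 : LC c (w.filter (· ≠ a)) (nfD (w.filter (· ≠ a))) :=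
        ih _ (by omega)
      rw [nfD_cons_min hne hmin]
      exact t1.trans (LC.cons a (LC.cons a t2))

lemma normD' (u : F) : c u (ofl (nfD (FreeMonoid.toList u))) := by
  have := normD hfi hx3 hx2y hxyx (FreeMonoid.toList u).length _ le_rfl
  simpa [LC, ofl] using this

end NormD

-- completeness for D
lemma nfD_congr {l m : List ℕ} (hc : ccnt l = ccnt m) (ho : onceL l = onceL m) :
    nfD l = nfD m := by
  have htwos : twosF l = twosF m := by
    ext b
    have := congrFun hc b
    simp only [ccnt] at this
    simp only [mem_twosF]
    omega
  unfold nfD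
  rw [htwos, ho]

-- ===== commutative normalization =====
section CommCalc
variable {c : Con F} (hfi : IsFullyInvariant c) (hxy : c (x*y) (y*x))
include hfi hxy

lemma LCswap (a b : ℕ) (l : List ℕ) : LC c (b::a::l) (a::b::l) := by
  have h : LC c [b,a] [a,b] := dcomm hfi hxy (of b) (of a)
  exact LC.mul h (LC.refl l)

lemma LCperm {l m : List ℕ} (h : l.Perm m) : LC c l m := by
  induction h with
  | nil => exact LC.refl _
  | cons a _ ih => exact LC.cons a ih
  | swap u v l => exact LCswap hfi hxy u v l
  | trans _ _ ih1 ih2 => exact ih1.trans ih2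

end CommCalc

lemma LCflat {c : Con F} {f g : ℕ → List ℕ} :
    ∀ l : List ℕ, (∀ a ∈ l, LC c (f a) (g a)) →
    LC c (l.flatMap f) (l.flatMap g)
  | [], _ => LC.refl _
  | a :: l, h => by
    simpa using LC.mul (h a (by simp)) (LCflat l (fun b hb => h b (by simp [hb])))

def expand (w : List ℕ) : List ℕ :=
  (w.toFinset.sort (·≤·)).flatMap (fun b => List.replicate (w.count b) b)

lemma count_flatMap_rep (f : ℕ → ℕ) : ∀ (l : List ℕ), l.Nodup → ∀ b,
    (l.flatMap (fun a => List.replicate (f a) a)).count b = if b ∈ l then f b else 0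
  | [], _, b => by simp
  | a :: l, hnd, b => by
    rw [List.flatMap_cons, List.count_append, List.count_replicate,
      count_flatMap_rep f l hnd.of_cons b]
    by_cases hba : b = a
    · subst hba
      have : b ∉ l := (List.nodup_cons.mp hnd).1
      simp [this]
    · simp [hba, Ne.symm hba]

lemma perm_expand (w : List ℕ) : w.Perm (expand w) := by
  rw [List.perm_iff_count]
  intro b
  unfold expand
  rw [count_flatMap_rep _ _ (Finset.sort_nodup _ _) b]
  by_cases hb : b ∈ w
  · simp [Finset.mem_sort, hb]
  · simp [Finset.mem_sort, hb, List.count_eq_zero_of_not_mem hb]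

section RepDown
variable {c : Con F} (hfi : IsFullyInvariant c) (hx3 : c (x^3) (x^2))
include hfi hx3

lemma repDown (a : ℕ) : ∀ k, LC c (List.replicate (k+2) a) [a,a]
  | 0 => LC.refl _
  | k+1 => by
    have h1 : LC c (a::a::a::(List.replicate k a)) (a::a::(List.replicate k a)) :=
      L1 hfi hx3 a _
    have h2 := repDown a k
    have e : List.replicate (k+1+2) a = a::a::a::List.replicate k a := by
      simp [List.replicate_succ]
    have e2 : List.replicate (k+2) a = a::a::List.replicate k a := by
      simp [List.replicate_succ]
    rw [e]
    exact h1.trans (e2 ▸ h2)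

lemma repMin (a n : ℕ) : LC c (List.replicate n a) (List.replicate (min n 2) a) := by
  match n with
  | 0 => exact LC.refl _
  | 1 => exact LC.refl _
  | (k+2) =>
    have e : min (k+2) 2 = 2 := by omega
    rw [e]
    exact repDown hfi hx3 a k

end RepDown

def nfC2 (w : List ℕ) : List ℕ :=
  (w.toFinset.sort (·≤·)).flatMap (fun b => List.replicate (min (w.count b) 2) b)

lemma normC2 {c : Con F} (hfi : IsFullyInvariant c) (hx3 : c (x^3) (x^2))
    (hxy : c (x*y) (y*x)) (w : List ℕ) : LC c w (nfC2 w) :=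
  (LCperm hfi hxy (perm_expand w)).trans
    (LCflat _ (fun a _ => repMin hfi hx3 a (w.count a)))

lemma toFinset_eq_of_ccnt {l m : List ℕ} (hc : ccnt l = ccnt m) :
    l.toFinset = m.toFinset := by
  ext b
  have := congrFun hc b
  simp only [ccnt] at this
  simp only [List.mem_toFinset, ← List.count_pos_iff]
  omega

lemma nfC2_congr {l m : List ℕ} (hc : ccnt l = ccnt m) : nfC2 l = nfC2 m := by
  unfold nfC2
  rw [toFinset_eq_of_ccnt hc]
  have he : (fun b => List.replicate (min (l.count b) 2) b)
      = (fun b => List.replicate (min (m.count b) 2) b) := by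
    funext b
    rw [show min (l.count b) 2 = min (m.count b) 2 from congrFun hc b]
  rw [he]

-- ===== SL normalization =====
section RepOne
variable {c : Con F} (hfi : IsFullyInvariant c) (hx2 : c (x^2) x)
include hfi hx2

lemma repOne (a : ℕ) : ∀ k, LC c (List.replicate (k+1) a) [a]
  | 0 => LC.refl _
  | k+1 => by
    have h1 : LC c (a::a::(List.replicate k a)) (a::(List.replicate k a)) :=
      L1SL hfi hx2 a _
    have h2 := repOne a k
    have e : List.replicate (k+1+1) a = a::a::List.replicate k a := by
      simp [List.replicate_succ]
    have e2 : List.replicate (k+1) a = a::List.replicate k a := by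
      simp [List.replicate_succ]
    rw [e]
    exact h1.trans (e2 ▸ h2)

end RepOne

def nfSL (w : List ℕ) : List ℕ := w.toFinset.sort (·≤·)

lemma normSL {c : Con F} (hfi : IsFullyInvariant c) (hx2 : c (x^2) x)
    (hxy : c (x*y) (y*x)) (w : List ℕ) : LC c w (nfSL w) := by
  have h1 := LCperm hfi hxy (perm_expand w)
  have h2 : LC c (expand w) (nfSL w) := by
    have h3 : LC c (expand w) ((w.toFinset.sort (·≤·)).flatMap (fun b => [b])) := by
      apply LCflat
      intro a ha
      have hmem : a ∈ w := by
        rwa [Finset.mem_sort, List.mem_toFinset] at ha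
      have hc1 : 1 ≤ w.count a := List.count_pos_iff.mpr hmem
      obtain ⟨k, hk⟩ : ∃ k, w.count a = k + 1 := ⟨w.count a - 1, by omega⟩
      rw [hk]
      exact repOne hfi hx2 a k
    have e : (w.toFinset.sort (·≤·)).flatMap (fun b => [b]) = nfSL w := by
      simp [nfSL]
    rwa [e] at h3
  exact h1.trans h2

lemma nfSL_congr {l m : List ℕ} (hc : l.toFinset = m.toFinset) : nfSL l = nfSL m := by
  unfold nfSL; rw [hc]

-- ===== endomorphism images =====
def subst1 (a : ℕ) : F →* F := FreeMonoid.lift (fun n => if n = a then x else 1)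

lemma prod_map_subst1 (a : ℕ) : ∀ w : List ℕ,
    (w.map (fun n => if n = a then x else 1)).prod = x ^ (List.count a w)
  | [] => by simp
  | b :: w => by
    rw [List.map_cons, List.prod_cons, prod_map_subst1 a w, List.count_cons]
    by_cases hba : b = a
    · subst hba
      simp [pow_succ']
    · simp [hba, Ne.symm hba]

lemma subst1_apply (a : ℕ) (u : F) :
    subst1 a u = x ^ (List.count a (FreeMonoid.toList u)) := by
  rw [subst1, FreeMonoid.lift_apply, prod_map_subst1]

def pab (a b : ℕ) : ℕ → Bool := fun n => n == a || n == b

def subst2e (a b : ℕ) : F →* F :=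
  FreeMonoid.lift (fun n => if n = a then x else if n = b then y else 1)

lemma prod_map_filter_pab (a b : ℕ) : ∀ w : List ℕ,
    (w.map (fun n => if n = a then x else if n = b then y else 1)).prod
      = ((w.filter (pab a b)).map (fun n => if n = a then x else if n = b then y else 1)).prod
  | [] => by simp
  | n :: w => by
    rw [List.map_cons, List.prod_cons, List.filter_cons]
    by_cases hn : pab a b n = true
    · rw [if_pos hn]
      rw [List.map_cons, List.prod_cons, prod_map_filter_pab a b w]
    · rw [if_neg hn]
      have h1 : n ≠ a ∧ n ≠ b := by
        simp [pab] at hn; exact hn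
      rw [if_neg h1.1, if_neg h1.2, one_mul, prod_map_filter_pab a b w]

lemma subst2e_apply_ab {a b : ℕ} (hab : a ≠ b) (u : F)
    (hfil : (FreeMonoid.toList u).filter (pab a b) = [a, b]) :
    subst2e a b u = x * y := by
  rw [subst2e, FreeMonoid.lift_apply, prod_map_filter_pab, hfil]
  simp [Ne.symm hab]

lemma subst2e_apply_ba {a b : ℕ} (hab : a ≠ b) (u : F)
    (hfil : (FreeMonoid.toList u).filter (pab a b) = [b, a]) :
    subst2e a b u = y * x := by
  rw [subst2e, FreeMonoid.lift_apply, prod_map_filter_pab, hfil]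
  simp [Ne.symm hab]

-- ===== order extraction =====
lemma exists_swap_pair : ∀ (l₁ l₂ : List ℕ), l₁.Nodup → l₂.Nodup →
    (∀ n, n ∈ l₁ ↔ n ∈ l₂) → l₁ ≠ l₂ →
    ∃ a b, a ≠ b ∧ l₁.filter (pab a b) = [a, b] ∧ l₂.filter (pab a b) = [b, a]
  | [], l₂, _, _, hm, hne => by
    exfalso
    apply hne
    have : l₂ = [] := List.eq_nil_iff_forall_not_mem.mpr (fun n hn => by
      simp at hm
      exact (hm n).elim hn)
    exact this.symm
  | c :: t₁, [], _, _, hm, _ => by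
    exfalso
    simpa using (hm c).mp (by simp)
  | c :: t₁, c' :: t₂, hn1, hn2, hm, hne => by
    by_cases hcc : c = c'
    · subst hcc
      have hct1 : c ∉ t₁ := (List.nodup_cons.mp hn1).1
      have hct2 : c ∉ t₂ := (List.nodup_cons.mp hn2).1
      have hmt : ∀ n, n ∈ t₁ ↔ n ∈ t₂ := by
        intro n
        constructor
        · intro hn
          have hnc : n ≠ c := fun h => hct1 (h ▸ hn)
          have := (hm n).mp (by simp [hn])
          simpa [hnc] using this
        · intro hn
          have hnc : n ≠ c := fun h => hct2 (h ▸ hn)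
          have := (hm n).mpr (by simp [hn])
          simpa [hnc] using this
      have hnet : t₁ ≠ t₂ := fun h => hne (by rw [h])
      obtain ⟨a, b, hab, h1, h2⟩ :=
        exists_swap_pair t₁ t₂ (List.nodup_cons.mp hn1).2 (List.nodup_cons.mp hn2).2 hmt hnet
      have hat : a ∈ t₁ := List.mem_of_mem_filter (h1 ▸ (by simp : a ∈ [a,b]))
      have hbt : b ∈ t₁ := List.mem_of_mem_filter (h1 ▸ (by simp : b ∈ [a,b]))
      have hca : c ≠ a := fun h => hct1 (h ▸ hat)
      have hcb : c ≠ b := fun h => hct1 (h ▸ hbt)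
      refine ⟨a, b, hab, ?_, ?_⟩
      · rw [List.filter_cons, if_neg (by simp [pab, hca, hcb]), h1]
      · rw [List.filter_cons, if_neg (by simp [pab, hca, hcb]), h2]
    · -- heads differ; the pair (c, c') is ordered differently
      have hc't1 : c' ∈ t₁ := by
        have := (hm c').mpr (by simp)
        simpa [Ne.symm hcc] using this
      have hct2 : c ∈ t₂ := by
        have := (hm c).mp (by simp)
        simpa [hcc] using this
      have hct1 : c ∉ t₁ := (List.nodup_cons.mp hn1).1
      have hc't2 : c' ∉ t₂ := (List.nodup_cons.mp hn2).1
      refine ⟨c, c', hcc, ?_, ?_⟩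
      · rw [List.filter_cons, if_pos (by simp [pab])]
        have e1 : t₁.filter (pab c c') = t₁.filter (· == c') := by
          apply List.filter_congr
          intro n hn
          have : n ≠ c := fun h => hct1 (h ▸ hn)
          simp [pab, this]
        rw [e1, List.filter_beq]
        rw [List.count_eq_one_of_mem (List.nodup_cons.mp hn1).2 hc't1]
        rfl
      · rw [List.filter_cons, if_pos (by simp [pab])]
        have e1 : t₂.filter (pab c c') = t₂.filter (· == c) := by
          apply List.filter_congr
          intro n hn
          have : n ≠ c' := fun h => hc't2 (h ▸ hn)
          simp [pab, this]
        rw [e1, List.filter_beq]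
        rw [List.count_eq_one_of_mem (List.nodup_cons.mp hn2).2 hct2]
        rfl

lemma mem_onceL {w : List ℕ} {a : ℕ} : a ∈ onceL w ↔ w.count a = 1 := by
  unfold onceL
  rw [List.mem_filter]
  constructor
  · intro h
    simpa using h.2
  · intro h
    exact ⟨List.count_pos_iff.mp (by omega), by simpa using h⟩

lemma nodup_onceL (w : List ℕ) : (onceL w).Nodup := by
  rw [List.nodup_iff_count_le_one]
  intro a
  by_cases h : w.count a = 1
  · unfold onceL
    rw [List.count_filter (by simpa using h)]
    omega
  · have hnm : a ∉ onceL w := fun hmem => h (mem_onceL.mp hmem)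
    rw [List.count_eq_zero.mpr hnm]
    omega

lemma filter_pab_onceL {w : List ℕ} {a b : ℕ} (ha : w.count a = 1) (hb : w.count b = 1) :
    (onceL w).filter (pab a b) = w.filter (pab a b) := by
  unfold onceL
  rw [List.filter_filter]
  apply List.filter_congr
  intro n hn
  by_cases hp : pab a b n = true
  · have : w.count n = 1 := by
      rcases (by simpa [pab] using hp : n = a ∨ n = b) with h | h
      · rw [h]; exact ha
      · rw [h]; exact hb
    simp [hp, this]
  · simp [hp]

-- ===== sigma congruences: generators and chain =====
abbrev tl (u : F) : List ℕ := FreeMonoid.toList u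

lemma genD1 : sigmaD.1 (x^3) (x^2) := by
  unfold sigmaD; exact fic_contains _ (Set.mem_insert _ _)
lemma genD2 : sigmaD.1 (x^2*y) (x*y*x) := by
  unfold sigmaD; exact fic_contains _ (Set.mem_insert_of_mem _ (Set.mem_insert _ _))
lemma genD3 : sigmaD.1 (x*y*x) (y*x^2) := by
  unfold sigmaD; exact fic_contains _ (Set.mem_insert_of_mem _ (Set.mem_insert_of_mem _ (Set.mem_singleton _)))
lemma genC2_1 : sigmaC2.1 (x^3) (x^2) := by
  unfold sigmaC2; exact fic_contains _ (Set.mem_insert _ _)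
lemma genC2_2 : sigmaC2.1 (x*y) (y*x) := by
  unfold sigmaC2; exact fic_contains _ (Set.mem_insert_of_mem _ (Set.mem_singleton _))
lemma genSL_1 : sigmaSL.1 (x^2) x := by
  unfold sigmaSL; exact fic_contains _ (Set.mem_insert _ _)
lemma genSL_2 : sigmaSL.1 (x*y) (y*x) := by
  unfold sigmaSL; exact fic_contains _ (Set.mem_insert_of_mem _ (Set.mem_singleton _))

lemma gens_of_leD {c : FICon} (h : sigmaD ≤ c) :
    c.1 (x^3) (x^2) ∧ c.1 (x^2*y) (x*y*x) ∧ c.1 (x*y*x) (y*x^2) :=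
  ⟨h genD1, h genD2, h genD3⟩

lemma sigmaD_le_C2 : sigmaD ≤ sigmaC2 := by
  apply fic_le
  intro p hp
  have hcomm := dcomm sigmaC2.2 genC2_2
  simp only [Set.mem_insert_iff, Set.mem_singleton_iff] at hp
  rcases hp with rfl | rfl | rfl
  · exact genC2_1
  · have h := (sigmaC2.1).mul ((sigmaC2.1).refl x) (hcomm x y)
    simpa [pow_two, mul_assoc] using h
  · have h := (sigmaC2.1).mul (hcomm x y) ((sigmaC2.1).refl x)
    simpa [pow_two, mul_assoc] using h

lemma sigmaC2_le_SL : sigmaC2 ≤ sigmaSL := by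
  apply fic_le
  intro p hp
  simp only [Set.mem_insert_iff, Set.mem_singleton_iff] at hp
  rcases hp with rfl | rfl
  · have h := (sigmaSL.1).mul genSL_1 ((sigmaSL.1).refl x)
    have h2 : sigmaSL.1 (x*x) (x^2) := (sigmaSL.1).refl _
    simpa [pow_succ, pow_two, mul_assoc] using h
  · exact genSL_2

-- normal form lemmas for the three sigmas
lemma sigmaD_nf (u : F) : sigmaD.1 u (ofl (nfD (tl u))) :=
  normD' sigmaD.2 genD1 genD2 genD3 u

lemma sigmaD_complete {u v : F} (hc : ccnt (tl u) = ccnt (tl v))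
    (ho : onceL (tl u) = onceL (tl v)) : sigmaD.1 u v := by
  have h1 := sigmaD_nf u
  have h2 := sigmaD_nf v
  rw [nfD_congr hc ho] at h1
  exact (sigmaD.1).trans h1 ((sigmaD.1).symm h2)

lemma sigmaC2_nf (u : F) : sigmaC2.1 u (ofl (nfC2 (tl u))) := by
  have h := normC2 sigmaC2.2 genC2_1 genC2_2 (tl u)
  simpa [LC, ofl] using h

lemma sigmaC2_complete {u v : F} (hc : ccnt (tl u) = ccnt (tl v)) : sigmaC2.1 u v := by
  have h1 := sigmaC2_nf u
  have h2 := sigmaC2_nf v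
  rw [nfC2_congr hc] at h1
  exact (sigmaC2.1).trans h1 ((sigmaC2.1).symm h2)

lemma sigmaSL_nf (u : F) : sigmaSL.1 u (ofl (nfSL (tl u))) := by
  have h := normSL sigmaSL.2 genSL_1 genSL_2 (tl u)
  simpa [LC, ofl] using h

lemma sigmaSL_complete {u v : F} (hc : (tl u).toFinset = (tl v).toFinset) :
    sigmaSL.1 u v := by
  have h1 := sigmaSL_nf u
  have h2 := sigmaSL_nf v
  rw [nfSL_congr hc] at h1
  exact (sigmaSL.1).trans h1 ((sigmaSL.1).symm h2)

-- ===== powers of x =====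
lemma xpow_eq : ∀ n : ℕ, x ^ n = ofl (List.replicate n 0)
  | 0 => by rfl
  | n+1 => by
    rw [pow_succ', xpow_eq n]
    rfl

lemma powD {c : FICon} (hD : sigmaD ≤ c) (k : ℕ) : c.1 (x^(k+2)) (x^2) := by
  have h := repDown (c := c.1) c.2 (hD genD1) 0 k
  rw [xpow_eq (k+2), xpow_eq 2]
  exact h

lemma powSL {c : FICon} (hx2 : c.1 (x^2) x) (k : ℕ) : c.1 (x^(k+1)) x := by
  have h := repOne (c := c.1) c.2 hx2 0 k
  rw [xpow_eq (k+1), show (x : F) = ofl (List.replicate 1 0) from rfl]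
  exact h

lemma top_of_one {c : FICon} (h : c.1 1 x) : c = ⊤ := by
  have hu : ∀ u : F, c.1 1 u := by
    intro u
    have h2 := c.2 (FreeMonoid.lift (fun _ => u)) 1 x h
    simpa [x] using h2
  exact eq_top (fun u v => (c.1).trans ((c.1).symm (hu u)) (hu v))

-- key separation lemma
lemma sep {c : FICon} (hD : sigmaD ≤ c) {p q : ℕ} (hpq : c.1 (x^p) (x^q))
    (hne : min p 2 ≠ min q 2) : (c.1 (x^2) x ∧ c.1 (x*y) (y*x)) ∨ c = ⊤ := by
  have hredc : ∀ m : ℕ, c.1 (x^m) (x^(min m 2)) := by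
    intro m
    match m with
    | 0 => exact (c.1).refl _
    | 1 => exact (c.1).refl _
    | k+2 =>
      have : min (k+2) 2 = 2 := by omega
      rw [this]
      exact powD hD k
  have key : c.1 (x^(min p 2)) (x^(min q 2)) :=
    (c.1).trans ((c.1).symm (hredc p)) ((c.1).trans hpq (hredc q))
  -- helper: from c.1 x (x^2) derive the left disjunct
  have fromx2 : c.1 x (x^2) → (c.1 (x^2) x ∧ c.1 (x*y) (y*x)) := by
    intro hxx2
    refine ⟨(c.1).symm hxx2, ?_⟩
    have hcen := dc c.2 (hD genD2) (hD genD3) x y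
    have h1 : c.1 (x*y) (x^2*y) := (c.1).mul hxx2 ((c.1).refl y)
    have h2 : c.1 (y*x^2) (y*x) := (c.1).mul ((c.1).refl y) ((c.1).symm hxx2)
    exact (c.1).trans ((c.1).trans h1 hcen) h2
  -- helper: from c.1 1 (x^2) derive top
  have from02 : c.1 1 (x^2) → c = ⊤ := by
    intro h02
    have h1 : c.1 (x*1) (x*x^2) := (c.1).mul ((c.1).refl x) h02
    have h2 : c.1 x (x^3) := by
      have e1 : x * (1:F) = x := mul_one x
      have e2 : x * x^2 = x^3 := (pow_succ' x 2).symm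
      rwa [e1, e2] at h1
    have h3 : c.1 x (x^2) := (c.1).trans h2 (hD genD1)
    exact top_of_one ((c.1).trans h02 ((c.1).symm h3))
  have hi : min p 2 = 0 ∨ min p 2 = 1 ∨ min p 2 = 2 := by omega
  have hj : min q 2 = 0 ∨ min q 2 = 1 ∨ min q 2 = 2 := by omega
  rcases hi with hi | hi | hi <;> rcases hj with hj | hj | hj <;>
    first
    | exact absurd (hi.trans hj.symm) hne
    | rw [hi, hj] at key
  · -- (0,1) : c 1 x
    exact Or.inr (top_of_one (by simpa using key))
  · -- (0,2) : c 1 x²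
    exact Or.inr (from02 (by simpa using key))
  · -- (1,0)
    exact Or.inr (top_of_one (by simpa using (c.1).symm key))
  · -- (1,2) : c x x²
    exact Or.inl (fromx2 (by simpa using key))
  · -- (2,0)
    exact Or.inr (from02 (by simpa using (c.1).symm key))
  · -- (2,1)
    exact Or.inl (fromx2 (by simpa using (c.1).symm key))

-- ===== lattice classification =====
lemma sl_le_of {c : FICon} (hx2 : c.1 (x^2) x) (hxy : c.1 (x*y) (y*x)) :
    sigmaSL ≤ c := by
  apply fic_le
  intro p hp
  simp only [Set.mem_insert_iff, Set.mem_singleton_iff] at hp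
  rcases hp with rfl | rfl
  · exact hx2
  · exact hxy

lemma c2_le_of {c : FICon} (hx3 : c.1 (x^3) (x^2)) (hxy : c.1 (x*y) (y*x)) :
    sigmaC2 ≤ c := by
  apply fic_le
  intro p hp
  simp only [Set.mem_insert_iff, Set.mem_singleton_iff] at hp
  rcases hp with rfl | rfl
  · exact hx3
  · exact hxy

lemma over_SL {c : FICon} (hSL : sigmaSL ≤ c) : c = sigmaSL ∨ c = ⊤ := by
  by_cases hk : ∀ u v : F, c.1 u v → (tl u).toFinset = (tl v).toFinset
  · left
    exact le_antisymm (fun u v huv => sigmaSL_complete (hk u v huv)) hSL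
  · right
    push_neg at hk
    obtain ⟨u, v, huv, hne⟩ := hk
    have hx2 : c.1 (x^2) x := hSL genSL_1
    have key : ∀ p : ℕ, 1 ≤ p → c.1 (x^p) (x^0) → c = ⊤ := by
      intro p hp h
      obtain ⟨k, rfl⟩ : ∃ k, p = k+1 := ⟨p-1, by omega⟩
      have h2 : c.1 x 1 := (c.1).trans ((c.1).symm (powSL hx2 k)) (by simpa using h)
      exact top_of_one ((c.1).symm h2)
    have h2 : ¬ ∀ a, a ∈ (tl u).toFinset ↔ a ∈ (tl v).toFinset :=
      fun h => hne (Finset.ext h)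
    push_neg at h2
    obtain ⟨a, ha⟩ := h2
    have himg := c.2 (subst1 a) u v huv
    rw [subst1_apply, subst1_apply] at himg
    have hmu : a ∈ (tl u).toFinset ↔ 1 ≤ (tl u).count a := by
      rw [List.mem_toFinset, ← List.count_pos_iff]
      exact Iff.rfl
    have hmv : a ∈ (tl v).toFinset ↔ 1 ≤ (tl v).count a := by
      rw [List.mem_toFinset, ← List.count_pos_iff]
      exact Iff.rfl
    rcases ha with ⟨hau, hav⟩ | ⟨hau, hav⟩
    · have hcv : (tl v).count a = 0 := by
        rw [hmv] at hav; omega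
      rw [hcv] at himg
      exact key _ (hmu.mp hau) himg
    · have hcu : (tl u).count a = 0 := by
        rw [hmu] at hau; omega
      rw [hcu] at himg
      exact key _ (hmv.mp hav) ((c.1).symm himg)

lemma over_C2 {c : FICon} (hC2 : sigmaC2 ≤ c) : c = sigmaC2 ∨ c = sigmaSL ∨ c = ⊤ := by
  have hD : sigmaD ≤ c := le_trans sigmaD_le_C2 hC2
  by_cases hk : ∀ u v : F, c.1 u v → ccnt (tl u) = ccnt (tl v)
  · left
    exact le_antisymm (fun u v huv => sigmaC2_complete (hk u v huv)) hC2
  · push_neg at hk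
    obtain ⟨u, v, huv, hne⟩ := hk
    obtain ⟨a, ha⟩ := Function.ne_iff.mp hne
    have himg := c.2 (subst1 a) u v huv
    rw [subst1_apply, subst1_apply] at himg
    have ha' : min ((tl u).count a) 2 ≠ min ((tl v).count a) 2 := ha
    rcases sep hD himg ha' with ⟨hx2, hxy⟩ | htop
    · rcases over_SL (sl_le_of hx2 hxy) with h | h
      · exact Or.inr (Or.inl h)
      · exact Or.inr (Or.inr h)
    · exact Or.inr (Or.inr htop)

lemma classify {c : FICon} (hD : sigmaD ≤ c) :
    c = sigmaD ∨ c = sigmaC2 ∨ c = sigmaSL ∨ c = ⊤ := by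
  by_cases hk : ∀ u v : F, c.1 u v →
      ccnt (tl u) = ccnt (tl v) ∧ onceL (tl u) = onceL (tl v)
  · left
    refine le_antisymm (fun u v huv => ?_) hD
    obtain ⟨h1, h2⟩ := hk u v huv
    exact sigmaD_complete h1 h2
  · push_neg at hk
    obtain ⟨u, v, huv, hne⟩ := hk
    by_cases hcc : ccnt (tl u) = ccnt (tl v)
    · -- the once-words must differ: derive commutativity
      have ho : onceL (tl u) ≠ onceL (tl v) := hne hcc
      have hmem : ∀ n, n ∈ onceL (tl u) ↔ n ∈ onceL (tl v) := by
        intro n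
        rw [mem_onceL, mem_onceL]
        have h := congrFun hcc n
        unfold ccnt at h
        omega
      obtain ⟨a, b, hab, h1, h2⟩ :=
        exists_swap_pair _ _ (nodup_onceL _) (nodup_onceL _) hmem ho
      have ha1u : (tl u).count a = 1 :=
        mem_onceL.mp (List.mem_of_mem_filter (h1 ▸ (by simp : a ∈ [a,b])))
      have hb1u : (tl u).count b = 1 :=
        mem_onceL.mp (List.mem_of_mem_filter (h1 ▸ (by simp : b ∈ [a,b])))
      have ha1v : (tl v).count a = 1 :=
        mem_onceL.mp (List.mem_of_mem_filter (h2 ▸ (by simp : a ∈ [b,a])))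
      have hb1v : (tl v).count b = 1 :=
        mem_onceL.mp (List.mem_of_mem_filter (h2 ▸ (by simp : b ∈ [b,a])))
      have hfu : (tl u).filter (pab a b) = [a, b] := by
        rw [← filter_pab_onceL ha1u hb1u]; exact h1
      have hfv : (tl v).filter (pab a b) = [b, a] := by
        rw [← filter_pab_onceL ha1v hb1v]; exact h2
      have himg := c.2 (subst2e a b) u v huv
      rw [subst2e_apply_ab hab u hfu, subst2e_apply_ba hab v hfv] at himg
      have hC2 : sigmaC2 ≤ c := c2_le_of (hD genD1) himg
      exact Or.inr (over_C2 hC2)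
    · -- capped contents differ
      obtain ⟨a, ha⟩ := Function.ne_iff.mp hcc
      have himg := c.2 (subst1 a) u v huv
      rw [subst1_apply, subst1_apply] at himg
      have ha' : min ((tl u).count a) 2 ≠ min ((tl v).count a) 2 := ha
      rcases sep hD himg ha' with ⟨hx2, hxy⟩ | htop
      · rcases over_SL (sl_le_of hx2 hxy) with h | h
        · exact Or.inr (Or.inr (Or.inl h))
        · exact Or.inr (Or.inr (Or.inr h))
      · exact Or.inr (Or.inr (Or.inr htop))

-- ===== strictness via models =====
def conFI (M : Type) [Monoid M] : FICon := ⟨conOf M, conOf_fi M⟩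

lemma pow3_eq {M : Type} [Monoid M] (m : M) : m^3 = m*m*m := by
  rw [pow_succ, pow_succ, pow_one]
lemma pow2_eq {M : Type} [Monoid M] (m : M) : m^2 = m*m := by
  rw [pow_succ, pow_one]

lemma sigmaD_le_MD : sigmaD ≤ conFI MD := by
  apply fic_le
  intro p hp
  simp only [Set.mem_insert_iff, Set.mem_singleton_iff] at hp
  rcases hp with rfl | rfl | rfl
  · intro φ
    show φ (x^3) = φ (x^2)
    rw [map_pow, map_pow, pow3_eq, pow2_eq]
    exact MD.id1 (φ x)
  · intro φ
    show φ (x^2*y) = φ (x*y*x)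
    rw [map_mul, map_pow, pow2_eq, map_mul, map_mul]
    exact MD.id2 (φ x) (φ y)
  · intro φ
    show φ (x*y*x) = φ (y*x^2)
    rw [map_mul, map_mul, map_mul, map_pow, pow2_eq]
    exact MD.id3 (φ x) (φ y)

lemma not_sigmaD_comm : ¬ sigmaD.1 (x*y) (y*x) := by
  intro h
  have h2 := sigmaD_le_MD h (FreeMonoid.lift (fun n => if n = 0 then MD.A else if n = 1 then MD.B else 1))
  rw [map_mul, map_mul] at h2
  have ex : (FreeMonoid.lift (fun n => if n = 0 then MD.A else if n = 1 then MD.B else 1)) x = MD.A := rfl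
  have ey : (FreeMonoid.lift (fun n => if n = 0 then MD.A else if n = 1 then MD.B else 1)) y = MD.B := rfl
  rw [ex, ey] at h2
  exact MD.abne h2

lemma MC2.id1 : ∀ m : MC2, m*m*m = m*m := by decide
lemma MC2.comm : ∀ m n : MC2, m*n = n*m := by decide
lemma MC2.ane : MC2.a * MC2.a ≠ MC2.a := by decide

lemma sigmaC2_le_MC2 : sigmaC2 ≤ conFI MC2 := by
  apply fic_le
  intro p hp
  simp only [Set.mem_insert_iff, Set.mem_singleton_iff] at hp
  rcases hp with rfl | rfl
  · intro φ
    show φ (x^3) = φ (x^2)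
    rw [map_pow, map_pow, pow3_eq, pow2_eq]
    exact MC2.id1 (φ x)
  · intro φ
    show φ (x*y) = φ (y*x)
    rw [map_mul, map_mul]
    exact MC2.comm (φ x) (φ y)

lemma not_sigmaC2_sq : ¬ sigmaC2.1 (x^2) x := by
  intro h
  have h2 := sigmaC2_le_MC2 h (FreeMonoid.lift (fun _ => MC2.a))
  rw [map_pow, pow2_eq] at h2
  have ex : (FreeMonoid.lift (fun _ : ℕ => MC2.a)) x = MC2.a := rfl
  rw [ex] at h2
  exact MC2.ane h2

lemma MSL.id1 : ∀ m : MSL, m*m = m := by decide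
lemma MSL.comm : ∀ m n : MSL, m*n = n*m := by decide
lemma MSL.ane : MSL.a ≠ 1 := by decide

lemma sigmaSL_le_MSL : sigmaSL ≤ conFI MSL := by
  apply fic_le
  intro p hp
  simp only [Set.mem_insert_iff, Set.mem_singleton_iff] at hp
  rcases hp with rfl | rfl
  · intro φ
    show φ (x^2) = φ x
    rw [map_pow, pow2_eq]
    exact MSL.id1 (φ x)
  · intro φ
    show φ (x*y) = φ (y*x)
    rw [map_mul, map_mul]
    exact MSL.comm (φ x) (φ y)

lemma not_sigmaSL_x1 : ¬ sigmaSL.1 x 1 := by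
  intro h
  have h2 := sigmaSL_le_MSL h (FreeMonoid.lift (fun _ => MSL.a))
  rw [map_one] at h2
  have ex : (FreeMonoid.lift (fun _ : ℕ => MSL.a)) x = MSL.a := rfl
  rw [ex] at h2
  exact MSL.ane h2

lemma strict_D_C2 : sigmaD < sigmaC2 := by
  refine lt_of_le_of_ne sigmaD_le_C2 (fun h => ?_)
  apply not_sigmaD_comm
  rw [h]
  exact genC2_2

lemma strict_C2_SL : sigmaC2 < sigmaSL := by
  refine lt_of_le_of_ne sigmaC2_le_SL (fun h => ?_)
  apply not_sigmaC2_sq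
  rw [h]
  exact genSL_1

lemma strict_SL_top : sigmaSL < ⊤ := by
  refine lt_of_le_of_ne le_top (fun h => ?_)
  apply not_sigmaSL_x1
  rw [h]
  exact top_rel x 1

end SubD

/-- The fully invariant congruences on `F` containing `σ_D` are exactly
`σ_D`, `σ_C2`, `σ_SL` and `⊤`, and these form the strict chain
`σ_D ⊊ σ_C2 ⊊ σ_SL ⊊ ⊤`.  (Equivalently, the subvariety lattice of the
monoid variety `D` is the four-element chain `T ⊂ SL ⊂ C₂ ⊂ D`.) -/
theorem subvarieties_of_D :
    (∀ c : FICon, sigmaD ≤ c ↔ c = sigmaD ∨ c = sigmaC2 ∨ c = sigmaSL ∨ c = ⊤) ∧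
      sigmaD < sigmaC2 ∧ sigmaC2 < sigmaSL ∧ sigmaSL < ⊤ := by
  refine ⟨fun c => ⟨SubD.classify, ?_⟩, SubD.strict_D_C2, SubD.strict_C2_SL, SubD.strict_SL_top⟩
  rintro (rfl | rfl | rfl | rfl)
  · exact le_refl _
  · exact SubD.sigmaD_le_C2
  · exact le_trans SubD.sigmaD_le_C2 SubD.sigmaC2_le_SL
  · exact le_top
end

section
/- Let W be the set of all words of the form y^{r₁} · x · t^{r₂} · z^{r₃} · x^{c} · y^{r₄} · t^{r₅} · x · z^{r₆} in F, where r₁, r₂, r₃, r₄, r₅, r₆ ≥ 2 and c ∈ {0, 1}. Then W is saturated for σ_K: for every u ∈ W and every word v ∈ F, if σ_K u v then v ∈ W. (In particular, W is a union of σ_K-equivalence classes; the paper states this as: W is a FIC(K)-class.) -/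
/-- The fully invariant congruence corresponding to the variety
`K = var{y²xt²z²y²t²xz² ≈ y²xt²z²xy²t²xz²}`. -/
noncomputable def sigmaK : FICon :=
  fic {(y ^ 2 * x * t ^ 2 * z ^ 2 * y ^ 2 * t ^ 2 * x * z ^ 2,
        y ^ 2 * x * t ^ 2 * z ^ 2 * x * y ^ 2 * t ^ 2 * x * z ^ 2)}

/-- The set `W` of all words `y^{r₁} x t^{r₂} z^{r₃} x^c y^{r₄} t^{r₅} x z^{r₆}`
with `r₁, …, r₆ ≥ 2` and `c ∈ {0, 1}`. -/
def W : Set F :=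
  {w | ∃ r₁ r₂ r₃ r₄ r₅ r₆ c : ℕ,
    2 ≤ r₁ ∧ 2 ≤ r₂ ∧ 2 ≤ r₃ ∧ 2 ≤ r₄ ∧ 2 ≤ r₅ ∧ 2 ≤ r₆ ∧ c ≤ 1 ∧
    w = y ^ r₁ * x * t ^ r₂ * z ^ r₃ * x ^ c * y ^ r₄ * t ^ r₅ * x * z ^ r₆}

namespace WSat


abbrev RLE := List (ℕ × ℕ)

def pushN (a n : ℕ) : RLE → RLE
  | [] => [(a, n)]
  | (b, m) :: tl => if a = b then (b, min (n + m) 2) :: tl else (a, n) :: (b, m) :: tl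

def crle : List ℕ → RLE
  | [] => []
  | a :: w => pushN a 1 (crle w)

def cmerge (S T : RLE) : RLE := S.foldr (fun p acc => pushN p.1 p.2 acc) T

lemma cmerge_nil (T : RLE) : cmerge [] T = T := rfl

lemma cmerge_cons (p : ℕ × ℕ) (S T : RLE) :
    cmerge (p :: S) T = pushN p.1 p.2 (cmerge S T) := rfl

lemma pushN_pushN (a n m : ℕ) (X : RLE) :
    pushN a n (pushN a m X) = pushN a (min (n + m) 2) X := by
  cases X with
  | nil => simp [pushN]
  | cons q X' =>
    obtain ⟨c, k⟩ := q
    by_cases h : a = c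
    · subst h
      have hm : min (n + min (m + k) 2) 2 = min (min (n + m) 2 + k) 2 := by omega
      simp [pushN, hm]
    · simp [pushN, if_neg h]

lemma cmerge_pushN (a n : ℕ) (S T : RLE) :
    cmerge (pushN a n S) T = pushN a n (cmerge S T) := by
  cases S with
  | nil => rfl
  | cons q S' =>
    obtain ⟨b, m⟩ := q
    by_cases h : a = b
    · subst h
      rw [show pushN a n ((a, m) :: S') = (a, min (n + m) 2) :: S' from by simp [pushN]]
      rw [show cmerge ((a, min (n + m) 2) :: S') T = pushN a (min (n + m) 2) (cmerge S' T) from rfl]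
      rw [show cmerge ((a, m) :: S') T = pushN a m (cmerge S' T) from rfl]
      rw [pushN_pushN]
    · simp only [pushN, if_neg h, cmerge_cons]

lemma crle_append (u v : List ℕ) : crle (u ++ v) = cmerge (crle u) (crle v) := by
  induction u with
  | nil => simp [crle, cmerge_nil]
  | cons a u ih => simp [crle, ih, cmerge_pushN]

def rw (R : RLE) : List ℕ := R.map Prod.fst

def pat1 : List ℕ := [1, 0, 3, 2, 0, 1, 3, 0, 2]
def pat2 : List ℕ := [1, 0, 3, 2, 1, 3, 0, 2]

def okR (R : RLE) : Prop := ∀ p ∈ R, p.1 = 0 → p.2 ≤ 1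

def live (R : RLE) : Prop := okR R ∧ (rw R <:+: pat1 ∨ rw R <:+: pat2)

instance : DecidablePred live := fun R => by
  unfold live okR
  infer_instance

def norm (w : List ℕ) : Option RLE := if live (crle w) then some (crle w) else none

def mulo : Option RLE → Option RLE → Option RLE
  | some S, some T => if live (cmerge S T) then some (cmerge S T) else none
  | _, _ => none

@[simp] lemma mulo_none_left (o : Option RLE) : mulo none o = none := by cases o <;> rfl
@[simp] lemma mulo_none_right (o : Option RLE) : mulo o none = none := by cases o <;> rfl

lemma pushN_ok {a n : ℕ} {R : RLE} (h : okR (pushN a n R)) :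
    (a = 0 → n ≤ 1) ∧ okR R := by
  cases R with
  | nil =>
    refine ⟨fun h0 => h (a, n) (by simp [pushN]) h0, fun p hp => absurd hp (by simp)⟩
  | cons q tl =>
    obtain ⟨b, m⟩ := q
    by_cases hab : a = b
    · subst hab
      simp only [pushN, if_pos rfl] at h
      have h1 := h (a, min (n + m) 2) (by simp)
      constructor
      · intro h0; have := h1 h0; omega
      · intro p hp
        rcases List.mem_cons.1 hp with rfl | hp'
        · intro h0; have := h1 h0; simp at this ⊢; omega
        · exact h p (List.mem_cons_of_mem _ hp')
    · simp only [pushN, if_neg hab] at h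
      exact ⟨fun h0 => h (a, n) (by simp) h0, fun p hp => h p (List.mem_cons_of_mem _ hp)⟩

lemma okR_cmerge {S T : RLE} (h : okR (cmerge S T)) : okR S ∧ okR T := by
  induction S with
  | nil => exact ⟨fun p hp => absurd hp (by simp), h⟩
  | cons q S' ih =>
    rw [cmerge_cons] at h
    obtain ⟨hq, h'⟩ := pushN_ok h
    obtain ⟨hS', hT⟩ := ih h'
    refine ⟨fun p hp => ?_, hT⟩
    rcases List.mem_cons.1 hp with rfl | hp'
    · exact hq
    · exact hS' p hp'

def wf (R : RLE) : Prop := (rw R).Chain' (· ≠ ·)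

lemma wf_pushN {R : RLE} (a n : ℕ) (h : wf R) : wf (pushN a n R) := by
  cases R with
  | nil => simp [wf, pushN, rw, List.Chain']
  | cons q tl =>
    obtain ⟨b, m⟩ := q
    by_cases hab : a = b
    · subst hab; simpa [wf, pushN, rw] using h
    · simp only [wf, pushN, if_neg hab, rw, List.map_cons] at h ⊢
      exact List.IsChain.cons_cons hab h

lemma wf_crle (w : List ℕ) : wf (crle w) := by
  induction w with
  | nil => simp [wf, crle, rw, List.Chain']
  | cons a w ih => exact wf_pushN a 1 ih

lemma pushN_head (a n : ℕ) (R : RLE) : ∃ k rest, pushN a n R = (a, k) :: rest := by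
  cases R with
  | nil => exact ⟨n, [], rfl⟩
  | cons q tl =>
    obtain ⟨b, m⟩ := q
    by_cases hab : a = b
    · subst hab; exact ⟨min (n + m) 2, tl, by simp [pushN]⟩
    · exact ⟨n, (b, m) :: tl, by simp [pushN, if_neg hab]⟩

lemma rw_cmerge (S T : RLE) (hS : wf S) :
    rw (cmerge S T) = rw S ++ rw T ∨
    ∃ s h tl, rw S = s ++ [h] ∧ rw T = h :: tl ∧ rw (cmerge S T) = rw S ++ tl := by
  induction S with
  | nil => left; simp [cmerge_nil, rw]
  | cons p S' ih =>
    obtain ⟨a, n⟩ := p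
    cases S' with
    | nil =>
      cases T with
      | nil => left; simp [cmerge, rw, pushN, List.foldr]
      | cons q T' =>
        obtain ⟨b, m⟩ := q
        by_cases hab : a = b
        · right
          subst hab
          refine ⟨[], a, rw T', by simp [rw], by simp [rw], ?_⟩
          show rw (pushN a n ((a, m) :: T')) = _
          simp [pushN, rw]
        · left
          show rw (pushN a n ((b, m) :: T')) = _
          simp [pushN, if_neg hab, rw]
    | cons q S'' =>
      have hS' : wf (q :: S'') := by
        simp only [wf, rw, List.map_cons] at hS ⊢
        exact hS.tail
      have hne : a ≠ q.1 := by
        simp only [wf, rw, List.map_cons] at hS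
        exact (List.isChain_cons_cons.1 hS).1
      obtain ⟨k, rest, hhd⟩ := pushN_head q.1 q.2 (cmerge S'' T)
      have hcm : cmerge ((a, n) :: q :: S'') T = (a, n) :: cmerge (q :: S'') T := by
        rw [cmerge_cons]
        rw [show cmerge (q :: S'') T = pushN q.1 q.2 (cmerge S'' T) from rfl] at *
        rw [hhd]
        simp [pushN, if_neg hne]
      rcases ih hS' with h1 | ⟨s, h, tl, e1, e2, e3⟩
      · left
        rw [hcm]
        simp only [rw, List.map_cons] at h1 ⊢
        rw [h1]
        simp [rw]
      · right
        refine ⟨a :: s, h, tl, ?_, e2, ?_⟩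
        · simp only [rw, List.map_cons] at e1 ⊢
          rw [e1]; rfl
        · rw [hcm]
          simp only [rw, List.map_cons] at e3 ⊢
          rw [e3]; rfl

lemma rw_left_infix {S T : RLE} (hS : wf S) : rw S <:+: rw (cmerge S T) := by
  rcases rw_cmerge S T hS with h | ⟨s, h, tl, _, _, e3⟩
  · rw [h]; exact (List.prefix_append _ _).isInfix
  · rw [e3]; exact (List.prefix_append _ _).isInfix

lemma rw_right_infix {S T : RLE} (hS : wf S) : rw T <:+: rw (cmerge S T) := by
  rcases rw_cmerge S T hS with h | ⟨s, h, tl, e1, e2, e3⟩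
  · rw [h]; exact (List.suffix_append _ _).isInfix
  · rw [e3, e1, e2]
    have : s ++ [h] ++ tl = s ++ (h :: tl) := by simp
    rw [this]
    exact (List.suffix_append _ _).isInfix

lemma live_cmerge {S T : RLE} (hS : wf S) (h : live (cmerge S T)) : live S ∧ live T := by
  obtain ⟨hok, hinf⟩ := h
  obtain ⟨hokS, hokT⟩ := okR_cmerge hok
  have h1 := rw_left_infix (T := T) hS
  have h2 := rw_right_infix (T := T) hS
  rcases hinf with h | h
  · exact ⟨⟨hokS, Or.inl (h1.trans h)⟩, ⟨hokT, Or.inl (h2.trans h)⟩⟩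
  · exact ⟨⟨hokS, Or.inr (h1.trans h)⟩, ⟨hokT, Or.inr (h2.trans h)⟩⟩

lemma norm_append (u v : List ℕ) : norm (u ++ v) = mulo (norm u) (norm v) := by
  by_cases hu : live (crle u)
  · by_cases hv : live (crle v)
    · simp only [norm, if_pos hu, if_pos hv, mulo, crle_append]
    · have : ¬ live (crle (u ++ v)) := by
        intro h
        rw [crle_append] at h
        exact hv (live_cmerge (wf_crle u) h).2
      simp [norm, if_pos hu, if_neg hv, if_neg this, mulo]
  · have : ¬ live (crle (u ++ v)) := by
      intro h
      rw [crle_append] at h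
      exact hu (live_cmerge (wf_crle u) h).1
    simp [norm, if_neg hu, if_neg this, mulo]

lemma crle_ne_nil (a : ℕ) (w : List ℕ) : crle (a :: w) ≠ [] := by
  show pushN a 1 (crle w) ≠ []
  obtain ⟨k, rest, h⟩ := pushN_head a 1 (crle w)
  rw [h]; simp

lemma crle_eq_nil {w : List ℕ} (h : crle w = []) : w = [] := by
  cases w with
  | nil => rfl
  | cons a w => exact absurd h (crle_ne_nil a w)

lemma crle_counts {w : List ℕ} : ∀ p ∈ crle w, 1 ≤ p.2 ∧ p.2 ≤ 2 := by
  induction w with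
  | nil => intro p hp; exact absurd hp (by simp [crle])
  | cons a w ih =>
    intro p hp
    rw [show crle (a :: w) = pushN a 1 (crle w) from rfl] at hp
    cases hc : crle w with
    | nil => rw [hc] at hp; simp [pushN] at hp; simp [hp]
    | cons q tl =>
      obtain ⟨b, m⟩ := q
      have hm : 1 ≤ m ∧ m ≤ 2 := by
        have := ih (b, m) (by rw [hc]; simp)
        simpa using this
      rw [hc] at hp
      by_cases hab : a = b
      · subst hab
        simp only [pushN, if_pos rfl] at hp
        rcases List.mem_cons.1 hp with rfl | hp'
        · exact ⟨by show 1 ≤ min (1 + m) 2; omega, by show min (1 + m) 2 ≤ 2; omega⟩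
        · exact ih _ (by rw [hc]; exact List.mem_cons_of_mem _ hp')
      · simp only [pushN, if_neg hab] at hp
        rcases List.mem_cons.1 hp with rfl | hp'
        · simp
        · exact ih _ (by rw [hc]; exact hp')

lemma crle_head {w : List ℕ} {b m : ℕ} {R : RLE} (h : crle w = (b, m) :: R) :
    ∃ w', w = b :: w' := by
  cases w with
  | nil => simp [crle] at h
  | cons a w' =>
    refine ⟨w', ?_⟩
    have : crle (a :: w') = pushN a 1 (crle w') := rfl
    obtain ⟨k, rest, hh⟩ := pushN_head a 1 (crle w')
    rw [this, hh] at h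
    injection h with h1 _
    injection h1 with h2 _
    rw [h2]

lemma crle_replicate {n a : ℕ} (hn : 1 ≤ n) :
    crle (List.replicate n a) = [(a, min n 2)] := by
  induction n with
  | zero => omega
  | succ k ih =>
    rcases Nat.eq_or_lt_of_le hn with h | h
    · have hk0 : k = 0 := by omega
      subst hk0
      simp [crle, pushN]
    · have hk : 1 ≤ k := by omega
      have : List.replicate (k + 1) a = a :: List.replicate k a := rfl
      rw [this, show crle (a :: List.replicate k a) = pushN a 1 (crle (List.replicate k a)) from rfl,
        ih hk]
      simp [pushN]
      omega

lemma crle_cons_inv {w : List ℕ} {a c : ℕ} {R : RLE} (h : crle w = (a, c) :: R) :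
    ∃ n w', 1 ≤ n ∧ min n 2 = c ∧ w = List.replicate n a ++ w' ∧ crle w' = R := by
  induction w generalizing a c R with
  | nil => simp [crle] at h
  | cons d w₂ ih =>
    have hd : crle (d :: w₂) = pushN d 1 (crle w₂) := rfl
    cases hw₂ : crle w₂ with
    | nil =>
      rw [hd, hw₂] at h
      simp only [pushN] at h
      injection h with h1 h2
      injection h1 with h3 h4
      exact ⟨1, w₂, le_refl 1, by omega, by rw [h3]; rfl, by rw [hw₂, h2]⟩
    | cons q R₂ =>
      obtain ⟨b, m⟩ := q
      by_cases hab : d = b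
      · subst hab
        rw [hd, hw₂] at h
        simp only [pushN, if_pos rfl] at h
        injection h with h1 h2
        injection h1 with h3 h4
        obtain ⟨n₂, w', hn₂, hmin, hw, hR⟩ := ih hw₂
        subst h3
        refine ⟨n₂ + 1, w', by omega, by omega, ?_, by rw [hR, h2]⟩
        rw [show List.replicate (n₂ + 1) d = d :: List.replicate n₂ d from rfl,
          List.cons_append, ← hw]
      · rw [hd, hw₂] at h
        simp only [pushN, if_neg hab] at h
        injection h with h1 h2
        injection h1 with h3 h4
        refine ⟨1, w₂, le_refl 1, by omega, by rw [h3]; rfl, by rw [hw₂, h2]⟩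

def P0 : RLE := [(1,2),(0,1),(3,2),(2,2),(1,2),(3,2),(0,1),(2,2)]
def P1 : RLE := [(1,2),(0,1),(3,2),(2,2),(0,1),(1,2),(3,2),(0,1),(2,2)]

/-! ### double-pair machinery -/

def dbl (b c : ℕ) (X : List ℕ) : Prop := ∃ e f, X = e ++ b :: c :: f ∧ [b, c] <:+: c :: f

lemma infix_cons_of_infix {X l : List ℕ} {c : ℕ} (h : X <:+: l) : X <:+: c :: l :=
  h.trans (List.suffix_cons c l).isInfix

lemma nodbl {pat : List ℕ} (hp : pat = pat1 ∨ pat = pat2) {b c : ℕ}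
    (hd : dbl b c pat) : False := by
  obtain ⟨e, f, he, hin⟩ := hd
  have hdrop : pat.drop e.length = b :: c :: f := by
    rw [he]
    exact List.drop_left (l₁ := e) (l₂ := b :: c :: f)
  have hlen : e.length + 2 ≤ pat.length := by
    rw [he, List.length_append, List.length_cons, List.length_cons]; omega
  rcases hp with rfl | rfl
  · have h9 : e.length ≤ 7 := by
      have : pat1.length = 9 := rfl
      omega
    generalize hk : e.length = k at hdrop h9
    interval_cases k <;>
      (simp only [pat1, List.drop] at hdrop;
       injection hdrop with h1 hdrop; injection hdrop with h2 hdrop;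
       subst h1; subst h2; subst hdrop; revert hin; decide)
  · have h9 : e.length ≤ 6 := by
      have : pat2.length = 8 := rfl
      omega
    generalize hk : e.length = k at hdrop h9
    interval_cases k <;>
      (simp only [pat2, List.drop] at hdrop;
       injection hdrop with h1 hdrop; injection hdrop with h2 hdrop;
       subst h1; subst h2; subst hdrop; revert hin; decide)

lemma dbl_of_infix {b c : ℕ} {X P : List ℕ} (hd : dbl b c X) (h : X <:+: P) : dbl b c P := by
  obtain ⟨e, f, he, hin⟩ := hd
  obtain ⟨u, v, huv⟩ := h
  refine ⟨u ++ e, f ++ v, ?_, ?_⟩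
  · rw [← huv, he]; simp
  · exact hin.trans (by exact ((c :: f).prefix_append v).isInfix)

lemma dbl_seed {S T : RLE} {b c : ℕ} {s' : List ℕ} (hS : wf S)
    (hrwS : rw S = b :: c :: s') (hT : [b, c] <:+: rw T) :
    dbl b c (rw (cmerge S T)) := by
  rcases rw_cmerge S T hS with h | ⟨s, hh, tl, e1, e2, e3⟩
  · refine ⟨[], s' ++ rw T, by rw [h, hrwS]; simp, ?_⟩
    exact infix_cons_of_infix (hT.trans (List.suffix_append s' (rw T)).isInfix)
  · refine ⟨[], s' ++ tl, by rw [e3, hrwS]; simp, ?_⟩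
    -- rw T = hh :: tl, rw S = s ++ [hh] = b :: c :: s'
    have hs : s ≠ [] := by
      intro hnil
      rw [hnil, hrwS] at e1
      simp at e1
    obtain ⟨b', s₅, hs₄⟩ := List.exists_cons_of_ne_nil hs
    -- s = b' :: s₅ ; rw S = b' :: (s₅ ++ [hh]) = b :: c :: s'
    have e1' : b :: c :: s' = (b' :: s₅) ++ [hh] := by rw [← hrwS, e1, hs₄]
    have hcs : c :: s' = s₅ ++ [hh] := by
      simp only [List.cons_append, List.cons.injEq] at e1'
      exact e1'.2
    have : [b, c] <:+: hh :: tl := by rw [← e2]; exact hT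
    refine this.trans ?_
    have : c :: (s' ++ tl) = (c :: s') ++ tl := rfl
    rw [this, hcs]
    have : s₅ ++ [hh] ++ tl = s₅ ++ (hh :: tl) := by simp
    rw [this]
    exact (List.suffix_append s₅ (hh :: tl)).isInfix

lemma pair_infix_cmerge {S T : RLE} {b c : ℕ} (hS : wf S) (h : [b, c] <:+: rw T) :
    [b, c] <:+: rw (cmerge S T) := by
  rcases rw_cmerge S T hS with h1 | ⟨s, hh, tl, e1, e2, e3⟩
  · rw [h1]; exact h.trans (List.suffix_append _ _).isInfix
  · rw [e3, e1]
    have : s ++ [hh] ++ tl = s ++ (hh :: tl) := by simp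
    rw [this, ← e2]
    exact h.trans (List.suffix_append _ _).isInfix

lemma pair_prefix_cmerge {S T : RLE} {b c : ℕ} {s' : List ℕ} (hS : wf S)
    (hrwS : rw S = b :: c :: s') : [b, c] <:+: rw (cmerge S T) := by
  have h := rw_left_infix (T := T) hS
  rw [hrwS] at h
  exact (List.IsInfix.trans ⟨[], s', by simp⟩ h)

lemma dbl_extend {L X : RLE} {b c : ℕ} (hL : wf L) (hd : dbl b c (rw X)) :
    dbl b c (rw (cmerge L X)) := by
  obtain ⟨e, f, he, hin⟩ := hd
  rcases rw_cmerge L X hL with h1 | ⟨s, hh, tl, e1, e2, e3⟩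
  · exact ⟨rw L ++ e, f, by rw [h1, he]; simp, hin⟩
  · -- rw X = hh :: tl,  rw (cmerge L X) = rw L ++ tl, rw L = s ++ [hh]
    rw [he] at e2
    cases e with
    | nil =>
      -- hh = b, tl = c :: f
      simp only [List.nil_append] at e2
      injection e2 with h2 h3
      refine ⟨s, f, ?_, hin⟩
      rw [e3, e1, h2, ← h3]
      simp
    | cons h₀ e₂ =>
      injection e2 with h2 h3
      refine ⟨s ++ [hh] ++ e₂, f, ?_, hin⟩
      rw [e3, e1, ← h3]
      simp
lemma two_occ {l m r w : List ℕ} (h2 : 2 ≤ (crle w).length) :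
    ¬ live (crle (l ++ (w ++ (m ++ (w ++ r))))) := by
  intro hl
  obtain ⟨p₁, R₁, hw1⟩ : ∃ p₁ R₁, crle w = p₁ :: R₁ := by
    cases h : crle w with
    | nil => rw [h] at h2; simp at h2
    | cons p R => exact ⟨p, R, rfl⟩
  obtain ⟨p₂, R₂, hw2⟩ : ∃ p₂ R₂, R₁ = p₂ :: R₂ := by
    cases h : R₁ with
    | nil => rw [h] at hw1; rw [hw1] at h2; simp at h2
    | cons p R => exact ⟨p, R, rfl⟩
  rw [hw2] at hw1
  have hrwS : rw (crle w) = p₁.1 :: p₂.1 :: rw R₂ := by rw [hw1]; rfl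
  have hdecomp : crle (l ++ (w ++ (m ++ (w ++ r)))) =
      cmerge (crle l) (cmerge (crle w) (cmerge (crle m) (cmerge (crle w) (crle r)))) := by
    rw [crle_append, crle_append, crle_append, crle_append]
  have hA : [p₁.1, p₂.1] <:+: rw (cmerge (crle w) (crle r)) :=
    pair_prefix_cmerge (wf_crle w) hrwS
  have hB : [p₁.1, p₂.1] <:+: rw (cmerge (crle m) (cmerge (crle w) (crle r))) :=
    pair_infix_cmerge (wf_crle m) hA
  have hD : dbl p₁.1 p₂.1 (rw (cmerge (crle w) (cmerge (crle m) (cmerge (crle w) (crle r))))) :=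
    dbl_seed (wf_crle w) hrwS hB
  have hE : dbl p₁.1 p₂.1 (rw (crle (l ++ (w ++ (m ++ (w ++ r)))))) := by
    rw [hdecomp]
    exact dbl_extend (wf_crle l) hD
  rcases hl.2 with h | h
  · exact nodbl (Or.inl rfl) (dbl_of_infix hE h)
  · exact nodbl (Or.inr rfl) (dbl_of_infix hE h)

lemma norm_eq_none {w : List ℕ} (h : ¬ live (crle w)) : norm w = none := by
  unfold norm; exact if_neg h

lemma norm_eq_some {w : List ℕ} (h : live (crle w)) : norm w = some (crle w) := by
  unfold norm; exact if_pos h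

lemma norm_some_inv {w : List ℕ} {S : RLE} (h : norm w = some S) :
    crle w = S ∧ live (crle w) := by
  unfold norm at h
  split at h
  · exact ⟨by injection h, by assumption⟩
  · cases h

lemma mem_pat_le3 {a : ℕ} (h : [a] <:+: pat1 ∨ [a] <:+: pat2) : a ≤ 3 := by
  have ha : a ∈ pat1 ∨ a ∈ pat2 := by
    rcases h with h | h
    · exact Or.inl (h.subset (by simp))
    · exact Or.inr (h.subset (by simp))
  rcases ha with h | h <;> (simp [pat1, pat2] at h; omega)

lemma sq_norm (wb : List ℕ) :
    norm (wb ++ wb) = none ∨ norm (wb ++ wb) = some [] ∨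
      norm (wb ++ wb) = some [(1, 2)] ∨ norm (wb ++ wb) = some [(2, 2)] ∨
      norm (wb ++ wb) = some [(3, 2)] := by
  rcases hc : crle wb with _ | ⟨⟨a, n⟩, R⟩
  · have hnil : wb = [] := crle_eq_nil hc
    subst hnil
    right; left
    have : live (crle (([] : List ℕ) ++ [])) := by decide
    rw [norm_eq_some this]
    rfl
  · cases R with
    | nil =>
      have hn1 : 1 ≤ n := (crle_counts (w := wb) (a, n) (by rw [hc]; simp)).1
      have hcc : crle (wb ++ wb) = [(a, 2)] := by
        rw [crle_append, hc]
        show pushN a n [(a, n)] = _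
        have hm : min (n + n) 2 = 2 := by omega
        simp [pushN, hm]
      by_cases ha : a ≤ 3
      · unfold norm
        rw [hcc]
        clear hcc hc hn1
        interval_cases a <;> decide
      · left
        apply norm_eq_none
        rw [hcc]
        intro hlv
        have h1 : [a] <:+: pat1 ∨ [a] <:+: pat2 := by
          have := hlv.2
          simpa [rw] using this
        exact ha (mem_pat_le3 h1)
    | cons q R' =>
      left
      apply norm_eq_none
      have h2 : 2 ≤ (crle wb).length := by
        rw [hc]; simp only [List.length_cons]; omega
      have := two_occ (l := ([] : List ℕ)) (m := ([] : List ℕ)) (r := ([] : List ℕ)) h2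
      simpa using this

lemma mulo_eval (S T : RLE) :
    mulo (some S) (some T) = if live (cmerge S T) then some (cmerge S T) else none := rfl

/-! ### deadness lemmas for multiplication by P0 / P1 -/

lemma infix_len9 {X : List ℕ} (h : X <:+: pat1 ∨ X <:+: pat2) : X.length ≤ 9 := by
  rcases h with h | h
  · exact h.length_le
  · exact h.length_le.trans (by decide)

lemma eq_pat1_of_len9 {X : List ℕ} (h : X <:+: pat1 ∨ X <:+: pat2) (h9 : X.length = 9) :
    X = pat1 := by
  rcases h with h | h
  · exact h.sublist.eq_of_length (by rw [h9]; rfl)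
  · exact absurd h.length_le (by rw [h9]; decide)

lemma deadL {S T : RLE} (hS : wf S) (hT : rw T = pat2 ∨ rw T = pat1)
    (hlv : live (cmerge S T)) : rw S = [] ∨ rw S = [1] := by
  have hlen : (rw (cmerge S T)).length ≤ 9 := infix_len9 hlv.2
  rcases rw_cmerge S T hS with h1 | ⟨s, hh, tl, e1, e2, e3⟩
  · rcases hT with hpt | hpt
    · -- rw T = pat2 (length 8)
      have hS1 : (rw S).length ≤ 1 := by
        rw [h1, hpt, List.length_append] at hlen
        have : pat2.length = 8 := rfl
        omega
      rcases hs : rw S with _ | ⟨d, s0⟩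
      · exact Or.inl rfl
      · have hs0 : s0 = [] := by
          rw [hs] at hS1; simpa using hS1
        subst hs0
        exfalso
        have h9 : rw (cmerge S T) = d :: pat2 := by rw [h1, hs, hpt]; rfl
        have heq : rw (cmerge S T) = pat1 := eq_pat1_of_len9 hlv.2 (by rw [h9]; rfl)
        rw [h9] at heq
        simp [pat1, pat2] at heq
    · -- rw T = pat1 (length 9)
      left
      have : (rw S).length = 0 := by
        rw [h1, hpt, List.length_append] at hlen
        have : pat1.length = 9 := rfl
        omega
      exact List.length_eq_zero_iff.1 this
  · -- merge case
    have hh1 : hh = 1 := by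
      rcases hT with hpt | hpt <;>
        (rw [hpt] at e2; injection e2 with h _; exact h.symm)
    cases s with
    | nil => right; rw [e1, hh1]; rfl
    | cons d s0 =>
      exfalso
      have hlenS : (rw S).length = s0.length + 2 := by rw [e1]; simp
      rcases hT with hpt | hpt
      · have htl : tl = [0, 3, 2, 1, 3, 0, 2] := by
          rw [hpt] at e2; injection e2 with _ h; exact h.symm
        have hlen2 : (rw S).length + 7 ≤ 9 := by
          rw [e3, List.length_append, htl] at hlen
          simpa using hlen
        have hs0 : s0 = [] := List.length_eq_zero_iff.1 (by omega)
        subst hs0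
        have hrS : rw S = [d, 1] := by rw [e1, hh1]; rfl
        have h9 : rw (cmerge S T) = d :: 1 :: [0, 3, 2, 1, 3, 0, 2] := by
          rw [e3, hrS, htl]; rfl
        have heq : rw (cmerge S T) = pat1 := eq_pat1_of_len9 hlv.2 (by rw [h9]; rfl)
        rw [h9] at heq
        simp [pat1] at heq
      · have htl : tl = [0, 3, 2, 0, 1, 3, 0, 2] := by
          rw [hpt] at e2; injection e2 with _ h; exact h.symm
        have : (rw S).length + 8 ≤ 9 := by
          rw [e3, List.length_append, htl] at hlen
          simpa using hlen
        omega

lemma deadR {P S : RLE} (hP : wf P) (hPrw : rw P = pat2 ∨ rw P = pat1)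
    (hlv : live (cmerge P S)) : rw S = [] ∨ rw S = [2] := by
  have hlen : (rw (cmerge P S)).length ≤ 9 := infix_len9 hlv.2
  rcases rw_cmerge P S hP with h1 | ⟨s, hh, tl, e1, e2, e3⟩
  · rcases hPrw with hpt | hpt
    · have hS1 : (rw S).length ≤ 1 := by
        rw [h1, hpt, List.length_append] at hlen
        have : pat2.length = 8 := rfl
        omega
      rcases hs : rw S with _ | ⟨d, s0⟩
      · exact Or.inl rfl
      · have hs0 : s0 = [] := by
          rw [hs] at hS1; simpa using hS1
        subst hs0
        exfalso
        have h9 : rw (cmerge P S) = pat2 ++ [d] := by rw [h1, hs, hpt]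
        have heq : rw (cmerge P S) = pat1 := eq_pat1_of_len9 hlv.2 (by rw [h9]; rfl)
        rw [h9] at heq
        simp [pat1, pat2] at heq
    · left
      have : (rw S).length = 0 := by
        rw [h1, hpt, List.length_append] at hlen
        have : pat1.length = 9 := rfl
        omega
      exact List.length_eq_zero_iff.1 this
  · -- merge case: hh = last of rw P = 2
    have hh2 : hh = 2 := by
      have hlast : (s ++ [hh]).getLast? = some hh := List.getLast?_concat (l := s)
      rcases hPrw with hpt | hpt <;>
        (rw [← e1, hpt] at hlast; injection hlast with h; exact h.symm)
    rcases hPrw with hpt | hpt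
    · have hlen2 : tl.length ≤ 1 := by
        rw [e3, List.length_append, hpt] at hlen
        have : pat2.length = 8 := rfl
        omega
      rcases htl : tl with _ | ⟨d, t0⟩
      · right; rw [e2, hh2, htl]
      · have ht0 : t0 = [] := by
          rw [htl] at hlen2; simpa using hlen2
        subst ht0
        exfalso
        have h9 : rw (cmerge P S) = pat2 ++ [d] := by rw [e3, hpt, htl]
        have heq := eq_pat1_of_len9 hlv.2 (by rw [h9]; rfl)
        rw [h9] at heq
        simp [pat1, pat2] at heq
    · have hlen2 : tl.length = 0 := by
        rw [e3, List.length_append, hpt] at hlen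
        have : pat1.length = 9 := rfl
        omega
      right
      rw [e2, hh2, List.length_eq_zero_iff.1 hlen2]
instance : DecidablePred wf := fun R => inferInstanceAs (Decidable ((rw R).IsChain (· ≠ ·)))

def pmem (o : Option RLE) : Prop := o = some P0 ∨ o = some P1

instance : DecidablePred pmem := fun o => by unfold pmem; infer_instance

lemma rw_eq_nil {S : RLE} (h : rw S = []) : S = [] := by
  cases S with
  | nil => rfl
  | cons p S' => simp [rw] at h

lemma rw_eq_single {S : RLE} {a : ℕ} (h : rw S = [a]) : ∃ n, S = [(a, n)] := by
  cases S with
  | nil => simp [rw] at h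
  | cons p S' =>
    cases S' with
    | nil =>
      obtain ⟨b, n⟩ := p
      refine ⟨n, ?_⟩
      simp [rw] at h
      rw [h]
    | cons q S'' => simp [rw] at h

lemma rwP0 : rw P0 = pat2 := rfl
lemma rwP1 : rw P1 = pat1 := rfl

lemma mulP_left (u : List ℕ) :
    mulo (norm u) (some P0) = mulo (norm u) (some P1) ∨
    (mulo (norm u) (some P0) = some P0 ∧ mulo (norm u) (some P1) = some P1) := by
  by_cases hl : live (crle u)
  case neg => left; rw [norm_eq_none hl]; rfl
  rw [norm_eq_some hl]
  by_cases h0 : crle u = [] ∨ ∃ n, crle u = [(1, n)]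
  · right
    rcases h0 with h | ⟨n, h⟩
    · rw [h]
      constructor <;> rw [mulo_eval, cmerge_nil, if_pos (by decide)]
    · rw [h]
      have hm : min (n + 2) 2 = 2 := by omega
      have c0 : cmerge [(1, n)] P0 = P0 := by
        show pushN 1 n P0 = P0
        simp [P0, pushN, hm]
      have c1 : cmerge [(1, n)] P1 = P1 := by
        show pushN 1 n P1 = P1
        simp [P1, pushN, hm]
      constructor
      · rw [mulo_eval, c0, if_pos (by decide)]
      · rw [mulo_eval, c1, if_pos (by decide)]
  · left
    have d0 : ¬ live (cmerge (crle u) P0) := by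
      intro hlv
      rcases deadL (wf_crle u) (Or.inl rwP0) hlv with h | h
      · exact h0 (Or.inl (rw_eq_nil h))
      · exact h0 (Or.inr (rw_eq_single h))
    have d1 : ¬ live (cmerge (crle u) P1) := by
      intro hlv
      rcases deadL (wf_crle u) (Or.inr rwP1) hlv with h | h
      · exact h0 (Or.inl (rw_eq_nil h))
      · exact h0 (Or.inr (rw_eq_single h))
    rw [mulo_eval, mulo_eval, if_neg d0, if_neg d1]

lemma mulP_right (u : List ℕ) :
    mulo (some P0) (norm u) = mulo (some P1) (norm u) ∨
    (mulo (some P0) (norm u) = some P0 ∧ mulo (some P1) (norm u) = some P1) := by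
  by_cases hl : live (crle u)
  case neg => left; rw [norm_eq_none hl]; rfl
  rw [norm_eq_some hl]
  by_cases h0 : crle u = [] ∨ ∃ n, crle u = [(2, n)]
  · right
    rcases h0 with h | ⟨n, h⟩
    · rw [h]
      constructor <;> rw [mulo_eval]
      · rw [show cmerge P0 [] = P0 from by decide, if_pos (by decide)]
      · rw [show cmerge P1 [] = P1 from by decide, if_pos (by decide)]
    · rw [h]
      have hm : min (2 + n) 2 = 2 := by omega
      have c0 : cmerge P0 [(2, n)] = P0 := by
        simp [P0, cmerge, pushN, hm]
      have c1 : cmerge P1 [(2, n)] = P1 := by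
        simp [P1, cmerge, pushN, hm]
      constructor
      · rw [mulo_eval, c0, if_pos (by decide)]
      · rw [mulo_eval, c1, if_pos (by decide)]
  · left
    have d0 : ¬ live (cmerge P0 (crle u)) := by
      intro hlv
      rcases deadR (by simp [wf, rw, P0, List.Chain']) (Or.inl rwP0) hlv with h | h
      · exact h0 (Or.inl (rw_eq_nil h))
      · exact h0 (Or.inr (rw_eq_single h))
    have d1 : ¬ live (cmerge P1 (crle u)) := by
      intro hlv
      rcases deadR (by simp [wf, rw, P1, List.Chain']) (Or.inr rwP1) hlv with h | h
      · exact h0 (Or.inl (rw_eq_nil h))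
      · exact h0 (Or.inr (rw_eq_single h))
    rw [mulo_eval, mulo_eval, if_neg d0, if_neg d1]

lemma norm_mul (u v : F) :
    norm (FreeMonoid.toList (u * v)) =
      mulo (norm (FreeMonoid.toList u)) (norm (FreeMonoid.toList v)) := by
  rw [FreeMonoid.toList_mul, norm_append]

def cc : Con F where
  r u v := norm (FreeMonoid.toList u) = norm (FreeMonoid.toList v) ∨
    (pmem (norm (FreeMonoid.toList u)) ∧ pmem (norm (FreeMonoid.toList v)))
  iseqv := by
    constructor
    · intro u; exact Or.inl rfl
    · intro u v h
      rcases h with h | ⟨h1, h2⟩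
      · exact Or.inl h.symm
      · exact Or.inr ⟨h2, h1⟩
    · intro u v w h1 h2
      rcases h1 with h1 | ⟨ha, hb⟩ <;> rcases h2 with h2 | ⟨hc, hd⟩
      · exact Or.inl (h1.trans h2)
      · exact Or.inr ⟨h1 ▸ hc, hd⟩
      · exact Or.inr ⟨ha, h2 ▸ hb⟩
      · exact Or.inr ⟨ha, hd⟩
  mul' := by
    intro a b c d h1 h2
    show norm (FreeMonoid.toList (a * c)) = norm (FreeMonoid.toList (b * d)) ∨ _
    rcases h2 with h2 | ⟨hc, hd⟩
    · rcases h1 with h1 | ⟨ha, hb⟩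
      · exact Or.inl (by rw [norm_mul, norm_mul, h1, h2])
      · rcases ha with ha | ha <;> rcases hb with hb | hb
        · exact Or.inl (by rw [norm_mul, norm_mul, ha, hb, h2])
        · rcases mulP_right (FreeMonoid.toList c) with h | ⟨hp, hq⟩
          · exact Or.inl (by rw [norm_mul, norm_mul, ha, hb, ← h2, h])
          · refine Or.inr ⟨Or.inl ?_, Or.inr ?_⟩
            · rw [norm_mul, ha]; exact hp
            · rw [norm_mul, hb, ← h2]; exact hq
        · rcases mulP_right (FreeMonoid.toList c) with h | ⟨hp, hq⟩
          · exact Or.inl (by rw [norm_mul, norm_mul, ha, hb, ← h2, h.symm])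
          · refine Or.inr ⟨Or.inr ?_, Or.inl ?_⟩
            · rw [norm_mul, ha]; exact hq
            · rw [norm_mul, hb, ← h2]; exact hp
        · exact Or.inl (by rw [norm_mul, norm_mul, ha, hb, h2])
    · rcases h1 with h1 | ⟨ha, hb⟩
      · rcases hc with hc | hc <;> rcases hd with hd | hd
        · exact Or.inl (by rw [norm_mul, norm_mul, hc, hd, h1])
        · rcases mulP_left (FreeMonoid.toList a) with h | ⟨hp, hq⟩
          · exact Or.inl (by rw [norm_mul, norm_mul, hc, hd, ← h1, h])
          · refine Or.inr ⟨Or.inl ?_, Or.inr ?_⟩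
            · rw [norm_mul, hc]; exact hp
            · rw [norm_mul, hd, ← h1]; exact hq
        · rcases mulP_left (FreeMonoid.toList a) with h | ⟨hp, hq⟩
          · exact Or.inl (by rw [norm_mul, norm_mul, hc, hd, ← h1, h.symm])
          · refine Or.inr ⟨Or.inr ?_, Or.inl ?_⟩
            · rw [norm_mul, hc]; exact hq
            · rw [norm_mul, hd, ← h1]; exact hp
        · exact Or.inl (by rw [norm_mul, norm_mul, hc, hd, h1])
      · left
        rw [norm_mul, norm_mul]
        rcases ha with ha | ha <;> rcases hc with hc | hc <;>
          rcases hb with hb | hb <;> rcases hd with hd | hd <;>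
          rw [ha, hc, hb, hd] <;> decide

lemma cc_iff (u v : F) : cc u v ↔
    (norm (FreeMonoid.toList u) = norm (FreeMonoid.toList v) ∨
      (pmem (norm (FreeMonoid.toList u)) ∧ pmem (norm (FreeMonoid.toList v)))) := Iff.rfl

/-! ### the finite check -/

def sqs : List (Option RLE) := [some [], some [(1,2)], some [(2,2)], some [(3,2)]]
def aas : List (Option RLE) :=
  [some [(0,1)], some [(1,1)], some [(1,2)], some [(2,1)], some [(2,2)], some [(3,1)], some [(3,2)]]

set_option maxRecDepth 10000 in
lemma fin_check : ∀ A ∈ aas, ∀ B ∈ sqs, ∀ T ∈ sqs, ∀ Z ∈ sqs,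
    (mulo B (mulo A (mulo T (mulo Z (mulo B (mulo T (mulo A Z)))))) =
      mulo B (mulo A (mulo T (mulo Z (mulo A (mulo B (mulo T (mulo A Z))))))) ∨
    (pmem (mulo B (mulo A (mulo T (mulo Z (mulo B (mulo T (mulo A Z))))))) ∧
     pmem (mulo B (mulo A (mulo T (mulo Z (mulo A (mulo B (mulo T (mulo A Z)))))))))) := by
  decide

lemma norm_decomp_p (Bw Aw Tw Zw : List ℕ) :
    norm (Bw ++ (Bw ++ (Aw ++ (Tw ++ (Tw ++ (Zw ++ (Zw ++ (Bw ++ (Bw ++ (Tw ++ (Tw ++ (Aw ++ (Zw ++ Zw))))))))))))) =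
    mulo (norm (Bw ++ Bw)) (mulo (norm Aw) (mulo (norm (Tw ++ Tw)) (mulo (norm (Zw ++ Zw))
      (mulo (norm (Bw ++ Bw)) (mulo (norm (Tw ++ Tw)) (mulo (norm Aw) (norm (Zw ++ Zw)))))))) := by
  rw [show Bw ++ (Bw ++ (Aw ++ (Tw ++ (Tw ++ (Zw ++ (Zw ++ (Bw ++ (Bw ++ (Tw ++ (Tw ++ (Aw ++ (Zw ++ Zw)))))))))))) =
      (Bw ++ Bw) ++ (Aw ++ ((Tw ++ Tw) ++ ((Zw ++ Zw) ++ ((Bw ++ Bw) ++ ((Tw ++ Tw) ++ (Aw ++ (Zw ++ Zw))))))) from by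
        simp [List.append_assoc]]
  rw [norm_append (Bw ++ Bw), norm_append Aw, norm_append (Tw ++ Tw), norm_append (Zw ++ Zw),
    norm_append (Bw ++ Bw), norm_append (Tw ++ Tw), norm_append Aw]

lemma norm_decomp_q (Bw Aw Tw Zw : List ℕ) :
    norm (Bw ++ (Bw ++ (Aw ++ (Tw ++ (Tw ++ (Zw ++ (Zw ++ (Aw ++ (Bw ++ (Bw ++ (Tw ++ (Tw ++ (Aw ++ (Zw ++ Zw)))))))))))))) =
    mulo (norm (Bw ++ Bw)) (mulo (norm Aw) (mulo (norm (Tw ++ Tw)) (mulo (norm (Zw ++ Zw))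
      (mulo (norm Aw) (mulo (norm (Bw ++ Bw)) (mulo (norm (Tw ++ Tw)) (mulo (norm Aw) (norm (Zw ++ Zw))))))))) := by
  rw [show Bw ++ (Bw ++ (Aw ++ (Tw ++ (Tw ++ (Zw ++ (Zw ++ (Aw ++ (Bw ++ (Bw ++ (Tw ++ (Tw ++ (Aw ++ (Zw ++ Zw))))))))))))) =
      (Bw ++ Bw) ++ (Aw ++ ((Tw ++ Tw) ++ ((Zw ++ Zw) ++ (Aw ++ ((Bw ++ Bw) ++ ((Tw ++ Tw) ++ (Aw ++ (Zw ++ Zw)))))))) from by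
        simp [List.append_assoc]]
  rw [norm_append (Bw ++ Bw), norm_append Aw, norm_append (Tw ++ Tw), norm_append (Zw ++ Zw),
    norm_append Aw, norm_append (Bw ++ Bw), norm_append (Tw ++ Tw), norm_append Aw]

/-! ### W characterization -/

lemma toList_of_pow (a k : ℕ) :
    FreeMonoid.toList ((FreeMonoid.of a) ^ k) = List.replicate k a := by
  induction k with
  | zero => rfl
  | succ n ih =>
    rw [pow_succ, FreeMonoid.toList_mul, ih, FreeMonoid.toList_of]
    exact (List.replicate_succ' (n := n) (a := a)).symm

lemma W_to_norm {w : F} (hw : w ∈ W) :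
    norm (FreeMonoid.toList w) = some P0 ∨ norm (FreeMonoid.toList w) = some P1 := by
  obtain ⟨r₁, r₂, r₃, r₄, r₅, r₆, c, h1, h2, h3, h4, h5, h6, hc, heq⟩ := hw
  subst heq
  have m1 : min r₁ 2 = 2 := by omega
  have m2 : min r₂ 2 = 2 := by omega
  have m3 : min r₃ 2 = 2 := by omega
  have m4 : min r₄ 2 = 2 := by omega
  have m5 : min r₅ 2 = 2 := by omega
  have m6 : min r₆ 2 = 2 := by omega
  interval_cases c
  · left
    have ht : FreeMonoid.toList (y ^ r₁ * x * t ^ r₂ * z ^ r₃ * x ^ 0 * y ^ r₄ * t ^ r₅ * x * z ^ r₆) =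
        List.replicate r₁ 1 ++ ([0] ++ (List.replicate r₂ 3 ++ (List.replicate r₃ 2 ++
          (List.replicate r₄ 1 ++ (List.replicate r₅ 3 ++ ([0] ++ List.replicate r₆ 2)))))) := by
      simp [x, y, z, t, FreeMonoid.toList_mul, toList_of_pow, List.append_assoc]
    rw [ht]
    have hcr : crle (List.replicate r₁ 1 ++ ([0] ++ (List.replicate r₂ 3 ++ (List.replicate r₃ 2 ++
        (List.replicate r₄ 1 ++ (List.replicate r₅ 3 ++ ([0] ++ List.replicate r₆ 2))))))) = P0 := by
      rw [crle_append, crle_append, crle_append, crle_append, crle_append, crle_append, crle_append,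
        crle_replicate (by omega), crle_replicate (by omega), crle_replicate (by omega),
        crle_replicate (by omega), crle_replicate (by omega), crle_replicate (by omega),
        m1, m2, m3, m4, m5, m6]
      decide
    unfold norm
    rw [hcr]
    rw [if_pos (show live P0 by decide)]
  · right
    have ht : FreeMonoid.toList (y ^ r₁ * x * t ^ r₂ * z ^ r₃ * x ^ 1 * y ^ r₄ * t ^ r₅ * x * z ^ r₆) =
        List.replicate r₁ 1 ++ ([0] ++ (List.replicate r₂ 3 ++ (List.replicate r₃ 2 ++
          ([0] ++ (List.replicate r₄ 1 ++ (List.replicate r₅ 3 ++ ([0] ++ List.replicate r₆ 2))))))) := by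
      simp [x, y, z, t, FreeMonoid.toList_mul, toList_of_pow, List.append_assoc]
    rw [ht]
    have hcr : crle (List.replicate r₁ 1 ++ ([0] ++ (List.replicate r₂ 3 ++ (List.replicate r₃ 2 ++
        ([0] ++ (List.replicate r₄ 1 ++ (List.replicate r₅ 3 ++ ([0] ++ List.replicate r₆ 2)))))))) = P1 := by
      rw [crle_append, crle_append, crle_append, crle_append, crle_append, crle_append, crle_append,
        crle_append,
        crle_replicate (by omega), crle_replicate (by omega), crle_replicate (by omega),
        crle_replicate (by omega), crle_replicate (by omega), crle_replicate (by omega),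
        m1, m2, m3, m4, m5, m6]
      decide
    unfold norm
    rw [hcr]
    rw [if_pos (show live P1 by decide)]

lemma norm_to_W {w : F}
    (h : norm (FreeMonoid.toList w) = some P0 ∨ norm (FreeMonoid.toList w) = some P1) :
    w ∈ W := by
  rcases h with h | h
  · obtain ⟨hcr, -⟩ := norm_some_inv h
    obtain ⟨n₁, w₁, hn₁, hm₁, he₁, hc₁⟩ := crle_cons_inv hcr
    obtain ⟨n₂, w₂, hn₂, hm₂, he₂, hc₂⟩ := crle_cons_inv hc₁
    obtain ⟨n₃, w₃, hn₃, hm₃, he₃, hc₃⟩ := crle_cons_inv hc₂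
    obtain ⟨n₄, w₄, hn₄, hm₄, he₄, hc₄⟩ := crle_cons_inv hc₃
    obtain ⟨n₅, w₅, hn₅, hm₅, he₅, hc₅⟩ := crle_cons_inv hc₄
    obtain ⟨n₆, w₆, hn₆, hm₆, he₆, hc₆⟩ := crle_cons_inv hc₅
    obtain ⟨n₇, w₇, hn₇, hm₇, he₇, hc₇⟩ := crle_cons_inv hc₆
    obtain ⟨n₈, w₈, hn₈, hm₈, he₈, hc₈⟩ := crle_cons_inv hc₇
    have hw₈ : w₈ = [] := crle_eq_nil hc₈
    have hn₂' : n₂ = 1 := by omega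
    have hn₇' : n₇ = 1 := by omega
    refine ⟨n₁, n₃, n₄, n₅, n₆, n₈, 0, by omega, by omega, by omega, by omega, by omega, by omega,
      by omega, ?_⟩
    apply FreeMonoid.toList.injective
    rw [he₁, he₂, he₃, he₄, he₅, he₆, he₇, he₈, hw₈, hn₂', hn₇']
    simp [x, y, z, t, FreeMonoid.toList_mul, toList_of_pow, List.append_assoc]
  · obtain ⟨hcr, -⟩ := norm_some_inv h
    obtain ⟨n₁, w₁, hn₁, hm₁, he₁, hc₁⟩ := crle_cons_inv hcr
    obtain ⟨n₂, w₂, hn₂, hm₂, he₂, hc₂⟩ := crle_cons_inv hc₁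
    obtain ⟨n₃, w₃, hn₃, hm₃, he₃, hc₃⟩ := crle_cons_inv hc₂
    obtain ⟨n₄, w₄, hn₄, hm₄, he₄, hc₄⟩ := crle_cons_inv hc₃
    obtain ⟨n₅, w₅, hn₅, hm₅, he₅, hc₅⟩ := crle_cons_inv hc₄
    obtain ⟨n₆, w₆, hn₆, hm₆, he₆, hc₆⟩ := crle_cons_inv hc₅
    obtain ⟨n₇, w₇, hn₇, hm₇, he₇, hc₇⟩ := crle_cons_inv hc₆
    obtain ⟨n₈, w₈, hn₈, hm₈, he₈, hc₈⟩ := crle_cons_inv hc₇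
    obtain ⟨n₉, w₉, hn₉, hm₉, he₉, hc₉⟩ := crle_cons_inv hc₈
    have hw₉ : w₉ = [] := crle_eq_nil hc₉
    have hn₂' : n₂ = 1 := by omega
    have hn₅' : n₅ = 1 := by omega
    have hn₈' : n₈ = 1 := by omega
    refine ⟨n₁, n₃, n₄, n₆, n₇, n₉, 1, by omega, by omega, by omega, by omega, by omega, by omega,
      by omega, ?_⟩
    apply FreeMonoid.toList.injective
    rw [he₁, he₂, he₃, he₄, he₅, he₆, he₇, he₈, he₉, hw₉, hn₂', hn₅', hn₈']
    simp [x, y, z, t, FreeMonoid.toList_mul, toList_of_pow, List.append_assoc]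

/-! ### the generating relation and the main lemma -/

def pw : F := y ^ 2 * x * t ^ 2 * z ^ 2 * y ^ 2 * t ^ 2 * x * z ^ 2
def qw : F := y ^ 2 * x * t ^ 2 * z ^ 2 * x * y ^ 2 * t ^ 2 * x * z ^ 2

def genRel : F → F → Prop := fun u v => ∃ ξ : F →* F, u = ξ pw ∧ v = ξ qw

lemma main_gen : ∀ u v : F, genRel u v → cc u v := by
  rintro _ _ ⟨ξ, rfl, rfl⟩
  rw [cc_iff]
  have hPl : FreeMonoid.toList (ξ pw) =
      FreeMonoid.toList (ξ y) ++ (FreeMonoid.toList (ξ y) ++ (FreeMonoid.toList (ξ x) ++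
      (FreeMonoid.toList (ξ t) ++ (FreeMonoid.toList (ξ t) ++ (FreeMonoid.toList (ξ z) ++
      (FreeMonoid.toList (ξ z) ++ (FreeMonoid.toList (ξ y) ++ (FreeMonoid.toList (ξ y) ++
      (FreeMonoid.toList (ξ t) ++ (FreeMonoid.toList (ξ t) ++ (FreeMonoid.toList (ξ x) ++
      (FreeMonoid.toList (ξ z) ++ FreeMonoid.toList (ξ z))))))))))))) := by
    simp [pw, map_mul, map_pow, pow_two, FreeMonoid.toList_mul, List.append_assoc]
  have hQl : FreeMonoid.toList (ξ qw) =
      FreeMonoid.toList (ξ y) ++ (FreeMonoid.toList (ξ y) ++ (FreeMonoid.toList (ξ x) ++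
      (FreeMonoid.toList (ξ t) ++ (FreeMonoid.toList (ξ t) ++ (FreeMonoid.toList (ξ z) ++
      (FreeMonoid.toList (ξ z) ++ (FreeMonoid.toList (ξ x) ++ (FreeMonoid.toList (ξ y) ++
      (FreeMonoid.toList (ξ y) ++ (FreeMonoid.toList (ξ t) ++ (FreeMonoid.toList (ξ t) ++
      (FreeMonoid.toList (ξ x) ++ (FreeMonoid.toList (ξ z) ++ FreeMonoid.toList (ξ z)))))))))))))) := by
    simp [qw, map_mul, map_pow, pow_two, FreeMonoid.toList_mul, List.append_assoc]
  set A := FreeMonoid.toList (ξ x) with hA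
  set B := FreeMonoid.toList (ξ y) with hB
  set T := FreeMonoid.toList (ξ t) with hT
  set Z := FreeMonoid.toList (ξ z) with hZ
  by_cases hA2 : 2 ≤ (crle A).length
  · left
    have d1 : norm (FreeMonoid.toList (ξ pw)) = none := by
      rw [hPl]
      rw [show B ++ (B ++ (A ++ (T ++ (T ++ (Z ++ (Z ++ (B ++ (B ++ (T ++ (T ++ (A ++ (Z ++ Z)))))))))))) =
          (B ++ B) ++ (A ++ ((T ++ (T ++ (Z ++ (Z ++ (B ++ (B ++ (T ++ T))))))) ++ (A ++ (Z ++ Z)))) from by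
            simp [List.append_assoc]]
      exact norm_eq_none (two_occ hA2)
    have d2 : norm (FreeMonoid.toList (ξ qw)) = none := by
      rw [hQl]
      rw [show B ++ (B ++ (A ++ (T ++ (T ++ (Z ++ (Z ++ (A ++ (B ++ (B ++ (T ++ (T ++ (A ++ (Z ++ Z))))))))))))) =
          (B ++ B) ++ (A ++ ((T ++ (T ++ (Z ++ Z))) ++ (A ++ (B ++ (B ++ (T ++ (T ++ (A ++ (Z ++ Z))))))))) from by
            simp [List.append_assoc]]
      exact norm_eq_none (two_occ hA2)
    rw [d1, d2]
  · rcases hAc : crle A with _ | ⟨⟨a, n⟩, R⟩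
    · left
      have hAnil : A = [] := crle_eq_nil hAc
      rw [hPl, hQl, hAnil]
      simp
    · have hR : R = [] := by
        cases R with
        | nil => rfl
        | cons p R' => exfalso; apply hA2; rw [hAc]; simp only [List.length_cons]; omega
      subst hR
      by_cases hlv : live (crle A)
      · have hNA : norm A = some [(a, n)] := by rw [norm_eq_some hlv, hAc]
        have hn : 1 ≤ n ∧ n ≤ 2 := by
          have := crle_counts (w := A) (a, n) (by rw [hAc]; simp)
          simpa using this
        have ha3 : a ≤ 3 := by
          apply mem_pat_le3
          have := hlv.2
          rw [hAc] at this
          simpa [rw] using this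
        have ha0 : a = 0 → n = 1 := by
          intro h0
          have := hlv.1 (a, n) (by rw [hAc]; simp) h0
          omega
        have hmemA : norm A ∈ aas := by
          rw [hNA]
          have h1n : n = 1 ∨ n = 2 := by omega
          interval_cases a <;> rcases h1n with rfl | rfl <;>
            first
              | decide
              | exact absurd (ha0 rfl) (by omega)
        have hBs : norm (B ++ B) = none ∨ norm (B ++ B) ∈ sqs := by
          rcases sq_norm B with h | h | h | h | h
          · exact Or.inl h
          all_goals exact Or.inr (by rw [h]; decide)
        have hTs : norm (T ++ T) = none ∨ norm (T ++ T) ∈ sqs := by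
          rcases sq_norm T with h | h | h | h | h
          · exact Or.inl h
          all_goals exact Or.inr (by rw [h]; decide)
        have hZs : norm (Z ++ Z) = none ∨ norm (Z ++ Z) ∈ sqs := by
          rcases sq_norm Z with h | h | h | h | h
          · exact Or.inl h
          all_goals exact Or.inr (by rw [h]; decide)
        rw [hPl, hQl, norm_decomp_p, norm_decomp_q]
        rcases hBs with hB2 | hB2
        · left; rw [hB2]; simp
        rcases hTs with hT2 | hT2
        · left; rw [hT2]; simp
        rcases hZs with hZ2 | hZ2
        · left; rw [hZ2]; simp
        exact fin_check (norm A) hmemA (norm (B ++ B)) hB2 (norm (T ++ T)) hT2 (norm (Z ++ Z)) hZ2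
      · left
        rw [hPl, hQl, norm_decomp_p, norm_decomp_q, norm_eq_none hlv]
        simp
lemma dcon_fi : IsFullyInvariant (conGen genRel) := by
  intro η u v h
  have hle : conGen genRel ≤ Con.comap η (map_mul η) (conGen genRel) := by
    apply Con.conGen_le.2
    rintro a b ⟨ξ, rfl, rfl⟩
    show (conGen genRel) (η (ξ pw)) (η (ξ qw))
    have h1 : η (ξ pw) = (η.comp ξ) pw := rfl
    have h2 : η (ξ qw) = (η.comp ξ) qw := rfl
    rw [h1, h2]
    exact ConGen.Rel.of _ _ ⟨η.comp ξ, rfl, rfl⟩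
  exact hle h

lemma dcon_le_cc : conGen genRel ≤ cc :=
  Con.conGen_le.2 fun u v h => main_gen u v h

end WSat

/-- The set `W` is saturated for `σ_K`: it is a union of `σ_K`-classes. -/
theorem W_saturated (u v : F) (hu : u ∈ W) (huv : sigmaK.1 u v) : v ∈ W := by
  have hmem : (⟨conGen WSat.genRel, WSat.dcon_fi⟩ : FICon) ∈
      {c : FICon | ∀ p ∈ ({(WSat.pw, WSat.qw)} : Set (F × F)), c.1 p.1 p.2} := by
    intro p hp
    rw [Set.mem_singleton_iff] at hp
    subst hp
    exact ConGen.Rel.of _ _ ⟨MonoidHom.id F, rfl, rfl⟩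
  have hle : sigmaK ≤ (⟨conGen WSat.genRel, WSat.dcon_fi⟩ : FICon) := sInf_le hmem
  have h1 : (conGen WSat.genRel) u v := hle huv
  have h2 : WSat.cc u v := WSat.dcon_le_cc h1
  have hu' := WSat.W_to_norm hu
  rw [WSat.cc_iff] at h2
  rcases h2 with h | ⟨-, h⟩
  · apply WSat.norm_to_W
    rw [← h]
    exact hu'
  · exact WSat.norm_to_W h
end

section
/- For all words u, v ∈ F: σ_LRB u v if and only if ini(u) = ini(v), where ini(w) is the initial part of w (the word obtained from w by retaining only the first occurrence of each letter, in order). (Equivalently: an identity u ≈ v holds in the variety LRB = var{xy ≈ xyx} of left regular band monoids if and only if ini(u) = ini(v).) -/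
/-- The fully invariant congruence corresponding to the variety
`LRB = var{xy ≈ xyx}` of left regular band monoids. -/
noncomputable def sigmaLRB : FICon := fic {(x * y, x * y * x)}

/-- The initial part of a word: the subword consisting of the first occurrence
of each letter, occurrences kept in their original order. -/
def ini (w : F) : F :=
  FreeMonoid.ofList
    ((FreeMonoid.toList w).foldl (fun acc a => if a ∈ acc then acc else acc ++ [a]) [])


namespace LRBAux

def step (acc : List ℕ) (a : ℕ) : List ℕ := if a ∈ acc then acc else acc ++ [a]

def g (l : List ℕ) : List ℕ := l.foldl step []

lemma mem_foldl_step (l : List ℕ) : ∀ (acc : List ℕ) (a : ℕ),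
    a ∈ l.foldl step acc ↔ a ∈ acc ∨ a ∈ l := by
  induction l with
  | nil => intro acc a; simp
  | cons b l ih =>
    intro acc a
    rw [List.foldl_cons, ih]
    by_cases hb : b ∈ acc
    · simp only [step, if_pos hb, List.mem_cons]
      constructor
      · exact fun h => h.imp_right Or.inr
      · rintro (h | rfl | h) <;> [exact Or.inl h; exact Or.inl hb; exact Or.inr h]
    · simp only [step, if_neg hb, List.mem_append, List.mem_singleton, List.mem_cons]
      tauto

lemma mem_g (l : List ℕ) (a : ℕ) : a ∈ g l ↔ a ∈ l := by
  simp [g, mem_foldl_step]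

lemma foldl_step_eq (l : List ℕ) : ∀ acc : List ℕ,
    l.foldl step acc = acc ++ (g l).filter (fun a => decide (a ∉ acc)) := by
  induction l with
  | nil => intro acc; simp [g]
  | cons a l ih =>
    intro acc
    have hg : g (a :: l) = a :: (g l).filter (fun b => decide (b ≠ a)) := by
      show l.foldl step (step [] a) = _
      rw [show step [] a = [a] by simp [step], ih]
      simp
    rw [List.foldl_cons, hg]
    by_cases ha : a ∈ acc
    · rw [show step acc a = acc from if_pos ha, ih,
        List.filter_cons_of_neg (by simp [ha]), List.filter_filter]
      congr 1
      apply List.filter_congr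
      intro b _
      by_cases hba : b ∈ acc
      · simp [hba]
      · have hne : b ≠ a := fun h => hba (h ▸ ha)
        simp [hba, hne]
    · rw [show step acc a = acc ++ [a] from if_neg ha, ih,
        List.filter_cons_of_pos (by simp [ha]), List.filter_filter, List.append_assoc]
      congr 1
      rw [List.singleton_append]
      congr 1
      apply List.filter_congr
      intro b _
      by_cases hba : b ∈ acc <;> by_cases hb : b = a <;> simp [hba, hb]

lemma g_append (l₁ l₂ : List ℕ) :
    g (l₁ ++ l₂) = g l₁ ++ (g l₂).filter (fun a => decide (a ∉ g l₁)) := by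
  rw [g, List.foldl_append, ← g, foldl_step_eq]

open FreeMonoid

lemma ini_eq (w : F) : ini w = FreeMonoid.ofList (g (FreeMonoid.toList w)) := rfl

lemma ini_mul (u v : F) :
    ini (u * v) = FreeMonoid.ofList (g (FreeMonoid.toList u) ++
      (g (FreeMonoid.toList v)).filter
        (fun a => decide (a ∉ g (FreeMonoid.toList u)))) := by
  rw [ini_eq, FreeMonoid.toList_mul, g_append]

/-- The kernel congruence of `ini`. -/
def d : Con F where
  r u v := ini u = ini v
  iseqv := ⟨fun _ => rfl, Eq.symm, Eq.trans⟩
  mul' := by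
    intro w' x' y' z' h1 h2
    have h1' : g (FreeMonoid.toList w') = g (FreeMonoid.toList x') :=
      congrArg FreeMonoid.toList h1
    have h2' : g (FreeMonoid.toList y') = g (FreeMonoid.toList z') :=
      congrArg FreeMonoid.toList h2
    show ini _ = ini _
    rw [ini_mul, ini_mul, h1', h2']

/-- The substitution instances of the defining identity. -/
def rel : F → F → Prop := fun u v => ∃ a b : F, u = a * b ∧ v = a * b * a

lemma e_fully_invariant : IsFullyInvariant (conGen rel) := by
  intro ξ u v h
  induction h with
  | of u v huv =>
    obtain ⟨a, b, rfl, rfl⟩ := huv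
    exact ConGen.Rel.of _ _ ⟨ξ a, ξ b, by rw [map_mul], by rw [map_mul, map_mul]⟩
  | refl w => exact ConGen.Rel.refl _
  | symm _ ih => exact ConGen.Rel.symm ih
  | trans _ _ ih1 ih2 => exact ConGen.Rel.trans ih1 ih2
  | mul _ _ ih1 ih2 =>
    have h := ConGen.Rel.mul ih1 ih2
    rw [← map_mul, ← map_mul] at h
    exact h

lemma ini_key (a b : F) : ini (a * b) = ini (a * b * a) := by
  rw [ini_eq (a * b), ini_eq (a * b * a), FreeMonoid.toList_mul (a * b) a, g_append]
  have hnil : (g (FreeMonoid.toList a)).filter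
      (fun c => decide (c ∉ g (FreeMonoid.toList (a * b)))) = [] := by
    apply List.filter_eq_nil_iff.mpr
    intro c hc
    have hmem : c ∈ g (FreeMonoid.toList (a * b)) := by
      rw [mem_g] at hc ⊢
      show c ∈ FreeMonoid.toList a ++ FreeMonoid.toList b
      exact List.mem_append_left _ hc
    simp only [decide_eq_true_eq, not_not]
    exact hmem
  rw [hnil, List.append_nil]

lemma e_le_d : conGen rel ≤ d := by
  apply Con.conGen_le.mpr
  rintro u v ⟨a, b, rfl, rfl⟩
  exact ini_key a b

section Backward

variable (c : Con F) (hinv : IsFullyInvariant c) (hpair : c (x * y) (x * y * x))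

include hinv hpair

lemma subst (p q : F) : c (p * q) (p * q * p) := by
  have h := hinv (FreeMonoid.lift fun n => if n = 0 then p else if n = 1 then q else 1)
    _ _ hpair
  simpa [x, y, map_mul, FreeMonoid.lift_eval_of] using h

lemma absorb (u : F) (a : ℕ) (ha : a ∈ FreeMonoid.toList u) :
    c (u * FreeMonoid.of a) u := by
  obtain ⟨s, t, hst⟩ := List.append_of_mem ha
  have hu : u = FreeMonoid.ofList s * (FreeMonoid.of a * FreeMonoid.ofList t) := by
    rw [← FreeMonoid.ofList_toList u, hst]; rfl
  have h1 : c (FreeMonoid.of a * FreeMonoid.ofList t)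
      (FreeMonoid.of a * FreeMonoid.ofList t * FreeMonoid.of a) :=
    subst c hinv hpair _ _
  have h2 := c.mul (c.refl (FreeMonoid.ofList s)) h1
  have key : u * FreeMonoid.of a =
      FreeMonoid.ofList s * (FreeMonoid.of a * FreeMonoid.ofList t * FreeMonoid.of a) := by
    rw [hu, mul_assoc]
  rw [key, hu]
  exact c.symm h2

lemma to_ini : ∀ (l acc : List ℕ),
    c (FreeMonoid.ofList acc * FreeMonoid.ofList l) (FreeMonoid.ofList (l.foldl step acc)) := by
  intro l
  induction l with
  | nil => intro acc; simpa using c.refl (FreeMonoid.ofList acc)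
  | cons a l ih =>
    intro acc
    rw [List.foldl_cons]
    by_cases ha : a ∈ acc
    · rw [show step acc a = acc from if_pos ha]
      have h1 : c (FreeMonoid.ofList acc * FreeMonoid.of a) (FreeMonoid.ofList acc) :=
        absorb c hinv hpair _ a (by simpa using ha)
      have h2 := c.mul h1 (c.refl (FreeMonoid.ofList l))
      have key : FreeMonoid.ofList acc * FreeMonoid.ofList (a :: l) =
          FreeMonoid.ofList acc * FreeMonoid.of a * FreeMonoid.ofList l := by
        rw [mul_assoc]; rfl
      rw [key]
      exact c.trans h2 (ih acc)
    · rw [show step acc a = acc ++ [a] from if_neg ha]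
      have key : FreeMonoid.ofList acc * FreeMonoid.ofList (a :: l) =
          FreeMonoid.ofList (acc ++ [a]) * FreeMonoid.ofList l := by
        rw [FreeMonoid.ofList_append, mul_assoc]; rfl
      rw [key]
      exact ih (acc ++ [a])

lemma c_ini (w : F) : c w (ini w) := by
  have h := to_ini c hinv hpair (FreeMonoid.toList w) []
  simpa [ini_eq, g, FreeMonoid.ofList_nil, FreeMonoid.ofList_toList] using h

end Backward

end LRBAux

/-- An identity `u ≈ v` holds in `LRB` if and only if `ini u = ini v`. -/
theorem sigmaLRB_iff_ini (u v : F) : sigmaLRB.1 u v ↔ ini u = ini v := by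
  constructor
  · intro h
    have hmem : (⟨conGen LRBAux.rel, LRBAux.e_fully_invariant⟩ : FICon) ∈
        {c : FICon | ∀ p ∈ ({(x * y, x * y * x)} : Set (F × F)), c.1 p.1 p.2} := by
      intro p hp
      rw [Set.mem_singleton_iff] at hp
      subst hp
      exact ConGen.Rel.of _ _ ⟨x, y, rfl, rfl⟩
    have he : (conGen LRBAux.rel) u v :=
      h (conGen LRBAux.rel) ⟨_, hmem, rfl⟩
    exact LRBAux.e_le_d he
  · intro h
    intro c hc
    obtain ⟨⟨c, hinv⟩, hcmem, rfl⟩ := hc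
    have hpair : c (x * y) (x * y * x) := hcmem (x * y, x * y * x) rfl
    have h1 := LRBAux.c_ini c hinv hpair u
    have h2 := LRBAux.c_ini c hinv hpair v
    exact c.trans h1 (h ▸ c.symm h2)
end

section
/- Let c be a fully invariant congruence on F and let n ≥ 1. The following are equivalent: (a) xⁿ is not an isoterm for c, i.e. there exists a word w ≠ xⁿ with c xⁿ w; (b) there exists m ≥ 1 such that c xⁿ xⁿ⁺ᵐ; (c) c is not contained in σ_{C_{n+1}} := FIC{(xⁿ⁺², xⁿ⁺¹), (xy, yx)}. (In variety language: the word xⁿ is not an isoterm for a monoid variety V if and only if V satisfies xⁿ ≈ xⁿ⁺ᵐ for some m ≥ 1, if and only if C_{n+1} ⊄ V.) -/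
/-! ### Auxiliary lemmas -/

lemma fic_rel_of_mem {S : Set (F × F)} {p : F × F} (hp : p ∈ S) : (fic S).1 p.1 p.2 := by
  intro d hd
  obtain ⟨e, he, rfl⟩ := hd
  exact he p hp

lemma fic_rel_of_fi {S : Set (F × F)} (d : Con F) (hfi : IsFullyInvariant d)
    (hS : ∀ p ∈ S, d p.1 p.2) {u v : F} (h : (fic S).1 u v) : d u v :=
  h d ⟨⟨d, hfi⟩, hS, rfl⟩
/-- truncated naturals with saturating addition (written multiplicatively) -/
def Mc (N : ℕ) : Type := {k : ℕ // k ≤ N}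

instance (N : ℕ) : CommMonoid (Mc N) where
  mul a b := ⟨min (a.1 + b.1) N, min_le_right _ _⟩
  one := ⟨0, N.zero_le⟩
  mul_assoc a b c := Subtype.ext (by show min (min (a.1+b.1) N + c.1) N = min (a.1 + min (b.1+c.1) N) N; omega)
  one_mul a := Subtype.ext (by show min (0 + a.1) N = a.1; have := a.2; omega)
  mul_one a := Subtype.ext (by show min (a.1 + 0) N = a.1; have := a.2; omega)
  mul_comm a b := Subtype.ext (by show min (a.1+b.1) N = min (b.1+a.1) N; omega)

lemma Mc.pow_val (N : ℕ) (g : Mc N) (k : ℕ) : (g ^ k).1 = min (g.1 * k) N := by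
  induction k with
  | zero => show (0:ℕ) = min (g.1 * 0) N; omega
  | succ k ih =>
    rw [pow_succ]
    show min ((g^k).1 + g.1) N = min (g.1 * (k+1)) N
    rw [ih, Nat.mul_succ]
    omega


/-- the kernel congruence of all homs into `Mc N` -/
def cM (N : ℕ) : Con F where
  r u v := ∀ φ : F →* Mc N, φ u = φ v
  iseqv := ⟨fun _ _ => rfl, fun h φ => (h φ).symm, fun h h' φ => (h φ).trans (h' φ)⟩
  mul' h h' φ := by rw [map_mul, map_mul, h φ, h' φ]

lemma cM_fi (N : ℕ) : IsFullyInvariant (cM N) := fun ξ _ _ h φ => h (φ.comp ξ)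

lemma cM_pair1 (n : ℕ) : (cM (n+1)) (x^(n+2)) (x^(n+1)) := by
  intro φ
  rw [map_pow, map_pow]
  apply Subtype.ext
  rw [Mc.pow_val, Mc.pow_val]
  rcases Nat.eq_zero_or_pos (φ x).1 with h | h
  · simp [h]
  · have h1 : n + 1 ≤ (φ x).1 * (n+1) := Nat.le_mul_of_pos_left _ h
    have h2 : (φ x).1 * (n+1) ≤ (φ x).1 * (n+2) := Nat.mul_le_mul_left _ (by omega)
    omega

lemma cM_pair2 (N : ℕ) : (cM N) (x*y) (y*x) := by
  intro φ; rw [map_mul, map_mul, mul_comm]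

lemma cM_sep (n m : ℕ) (hm : 1 ≤ m) : ¬ (cM (n+1)) (x^n) (x^(n+m)) := by
  intro h
  have := h (FreeMonoid.lift (fun _ => (⟨1, by omega⟩ : Mc (n+1))))
  rw [map_pow, map_pow] at this
  have hv := congrArg Subtype.val this
  rw [Mc.pow_val, Mc.pow_val] at hv
  simp only [x, FreeMonoid.lift_eval_of] at hv
  erw [FreeMonoid.lift_eval_of] at hv
  simp only [one_mul] at hv
  omega

lemma sigma_not (n m : ℕ) (hm : 1 ≤ m) :
    ¬ (fic {(x ^ (n + 2), x ^ (n + 1)), (x * y, y * x)}).1 (x^n) (x^(n+m)) := by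
  intro h
  refine cM_sep n m hm (fic_rel_of_fi (cM (n+1)) (cM_fi _) ?_ h)
  rintro p (rfl | rfl)
  · exact cM_pair1 n
  · exact cM_pair2 (n+1)

/-- abbreviation for the congruence of `C_{n+1}` -/
noncomputable def sig (n : ℕ) : FICon := fic {(x ^ (n + 2), x ^ (n + 1)), (x * y, y * x)}

lemma sig_rel1 (n : ℕ) : (sig n).1 (x ^ (n+2)) (x ^ (n+1)) := by
  unfold sig
  exact fic_rel_of_mem (p := (x ^ (n+2), x ^ (n+1))) (Set.mem_insert_iff.mpr (Or.inl rfl))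

lemma sig_rel2 (n : ℕ) : (sig n).1 (x * y) (y * x) := by
  unfold sig
  exact fic_rel_of_mem (p := (x * y, y * x)) (Set.mem_insert_iff.mpr (Or.inr rfl))

lemma sig_comm (n : ℕ) (u v : F) : (sig n).1 (u * v) (v * u) := by
  have h := (sig n).2 (FreeMonoid.lift (fun i => if i = 0 then u else v)) _ _
    (sig_rel2 n)
  simpa [x, y, FreeMonoid.lift_eval_of] using h

lemma sig_pow (n : ℕ) (u : F) : (sig n).1 (u ^ (n+2)) (u ^ (n+1)) := by
  have h := (sig n).2 (FreeMonoid.lift (fun _ => u)) _ _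
    (sig_rel1 n)
  simpa [x, FreeMonoid.lift_eval_of] using h

lemma sig_pow_ge (n : ℕ) (u : F) (k : ℕ) (hk : n + 1 ≤ k) :
    (sig n).1 (u ^ k) (u ^ (n+1)) := by
  induction k, hk using Nat.le_induction with
  | base => exact (sig n).1.refl _
  | succ k hk ih =>
    have h1 : (sig n).1 (u ^ (k+1)) (u ^ (n+2)) := by
      have := (sig n).1.mul ih ((sig n).1.refl u)
      rwa [← pow_succ, ← pow_succ] at this
    exact (sig n).1.trans h1 (sig_pow n u)

lemma sig_pow_min (n : ℕ) (u : F) (k : ℕ) :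
    (sig n).1 (u ^ k) (u ^ (min k (n+1))) := by
  rcases le_total k (n+1) with h | h
  · rw [min_eq_left h]; exact (sig n).1.refl _
  · rw [min_eq_right h]; exact sig_pow_ge n u k h

lemma sig_perm (n : ℕ) {l l' : List ℕ} (h : l.Perm l') :
    (sig n).1 (FreeMonoid.ofList l) (FreeMonoid.ofList l') := by
  induction h with
  | nil => exact (sig n).1.refl _
  | cons a _ ih =>
    rw [FreeMonoid.ofList_cons, FreeMonoid.ofList_cons]
    exact (sig n).1.mul ((sig n).1.refl _) ih
  | swap a b l =>
    rw [FreeMonoid.ofList_cons, FreeMonoid.ofList_cons, FreeMonoid.ofList_cons,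
      FreeMonoid.ofList_cons, ← mul_assoc, ← mul_assoc]
    exact (sig n).1.mul (sig_comm n _ _) ((sig n).1.refl _)
  | trans _ _ ih1 ih2 => exact (sig n).1.trans ih1 ih2

lemma ofList_replicate (a : ℕ) (k : ℕ) :
    FreeMonoid.ofList (List.replicate k a) = FreeMonoid.of a ^ k := by
  induction k with
  | zero => rfl
  | succ k ih =>
    rw [List.replicate_succ, FreeMonoid.ofList_cons, ih, pow_succ']

lemma count_flatMap_replicate (b : ℕ) (l : List ℕ) (hl : l.Nodup) (f : ℕ → ℕ) :
    (l.flatMap fun a => List.replicate (f a) a).count b = if b ∈ l then f b else 0 := by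
  induction l with
  | nil => simp
  | cons a l ih =>
    rw [List.flatMap_cons, List.count_append, List.count_replicate]
    rcases List.nodup_cons.mp hl with ⟨ha, hl'⟩
    by_cases hba : b = a
    · subst hba
      rw [ih hl']
      simp [ha]
    · rw [ih hl']
      simp [hba, Ne.symm hba]

/-- the sorted list of distinct letters of a word -/
def lset (u : F) : List ℕ := (FreeMonoid.toList u).toFinset.sort (· ≤ ·)

/-- the canonical form of a word modulo `sig n` -/
def canon (n : ℕ) (u : F) : F :=
  FreeMonoid.ofList ((lset u).flatMap fun a =>
    List.replicate (min ((FreeMonoid.toList u).count a) (n+1)) a)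

lemma sig_flatMap (n : ℕ) (l : List ℕ) (f g : ℕ → ℕ)
    (h : ∀ a ∈ l, (sig n).1 (FreeMonoid.of a ^ f a) (FreeMonoid.of a ^ g a)) :
    (sig n).1 (FreeMonoid.ofList (l.flatMap fun a => List.replicate (f a) a))
      (FreeMonoid.ofList (l.flatMap fun a => List.replicate (g a) a)) := by
  induction l with
  | nil => exact (sig n).1.refl _
  | cons a l ih =>
    rw [List.flatMap_cons, List.flatMap_cons, FreeMonoid.ofList_append,
      FreeMonoid.ofList_append, ofList_replicate, ofList_replicate]
    exact (sig n).1.mul (h a List.mem_cons_self) (ih fun b hb => h b (List.mem_cons_of_mem a hb))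

lemma sig_canon (n : ℕ) (u : F) : (sig n).1 u (canon n u) := by
  have hperm : (FreeMonoid.toList u).Perm
      ((lset u).flatMap fun a => List.replicate ((FreeMonoid.toList u).count a) a) := by
    rw [List.perm_iff_count]
    intro b
    simp only [lset]
    rw [count_flatMap_replicate b _ (Finset.sort_nodup _ _) _]
    by_cases hb : b ∈ FreeMonoid.toList u
    · simp [Finset.mem_sort, List.mem_toFinset, hb]
    · simp [Finset.mem_sort, List.mem_toFinset, hb, List.count_eq_zero_of_not_mem hb]
  have h1 : (sig n).1 u (FreeMonoid.ofList
      ((lset u).flatMap fun a => List.replicate ((FreeMonoid.toList u).count a) a)) :=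
    sig_perm n hperm
  refine (sig n).1.trans h1 ?_
  exact sig_flatMap n _ _ _ fun a _ => sig_pow_min n (FreeMonoid.of a) _

lemma canon_eq (n : ℕ) (u v : F)
    (h : ∀ a, min ((FreeMonoid.toList u).count a) (n+1)
      = min ((FreeMonoid.toList v).count a) (n+1)) : canon n u = canon n v := by
  have hset : (FreeMonoid.toList u).toFinset = (FreeMonoid.toList v).toFinset := by
    ext a
    have := h a
    rw [List.mem_toFinset, List.mem_toFinset, ← List.count_pos_iff, ← List.count_pos_iff]
    omega
  have hf : (fun a => List.replicate (min ((FreeMonoid.toList u).count a) (n+1)) a)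
      = fun a => List.replicate (min ((FreeMonoid.toList v).count a) (n+1)) a := by
    funext a
    rw [h a]
  unfold canon lset
  rw [hset, hf]

lemma sig_of_counts (n : ℕ) (u v : F)
    (h : ∀ a, min ((FreeMonoid.toList u).count a) (n+1)
      = min ((FreeMonoid.toList v).count a) (n+1)) : (sig n).1 u v :=
  (sig n).1.trans (sig_canon n u) (canon_eq n u v h ▸ ((sig n).1.symm (sig_canon n v)))

lemma lift_pow (e : ℕ → ℕ) (l : List ℕ) :
    FreeMonoid.lift (fun b => x ^ e b) (FreeMonoid.ofList l) = x ^ (l.map e).sum := by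
  rw [FreeMonoid.lift_ofList]
  induction l with
  | nil => simp
  | cons a l ih =>
    rw [List.map_cons, List.prod_cons, ih, List.map_cons, List.sum_cons, pow_add]

lemma sum_indicator (a : ℕ) (l : List ℕ) :
    (l.map fun b => if b = a then 1 else 0).sum = l.count a := by
  induction l with
  | nil => simp
  | cons b l ih =>
    rw [List.map_cons, List.sum_cons, ih, List.count_cons]
    by_cases hba : b = a
    · subst hba; simp; omega
    · simp [hba, Ne.symm hba]

lemma sum_two (a : ℕ) (l : List ℕ) :
    (l.map fun b => if b = a then 2 else 1).sum = l.length + l.count a := by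
  induction l with
  | nil => simp
  | cons b l ih =>
    rw [List.map_cons, List.sum_cons, ih, List.count_cons, List.length_cons]
    by_cases hba : b = a
    · subst hba; simp; omega
    · simp [hba, Ne.symm hba]; omega

lemma x_pow_eq (k : ℕ) : x ^ k = FreeMonoid.ofList (List.replicate k 0) := by
  rw [ofList_replicate]; rfl

/-- if `c` relates two distinct powers of `x`, the smaller being at most `n`,
then `c` relates `xⁿ` to a higher power of `x`. -/
lemma step (c : FICon) (n p q : ℕ) (h : c.1 (x^p) (x^q)) (hpq : p < q) (hpn : p ≤ n) :
    ∃ m : ℕ, 1 ≤ m ∧ c.1 (x ^ n) (x ^ (n + m)) := by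
  refine ⟨q - p, by omega, ?_⟩
  have h2 := c.1.mul h (c.1.refl (x ^ (n - p)))
  rw [← pow_add, ← pow_add] at h2
  have e1 : p + (n - p) = n := by omega
  have e2 : q + (n - p) = n + (q - p) := by omega
  rwa [e1, e2] at h2

/-- extracting the powers of a single letter via an endomorphism -/
lemma count_rel (c : FICon) (u v : F) (h : c.1 u v) (a : ℕ) :
    c.1 (x ^ ((FreeMonoid.toList u).count a)) (x ^ ((FreeMonoid.toList v).count a)) := by
  have hfi := c.2 (FreeMonoid.lift (fun b => x ^ (if b = a then 1 else 0))) u v h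
  have hu : FreeMonoid.lift (fun b => x ^ (if b = a then 1 else 0)) u
      = x ^ ((FreeMonoid.toList u).count a) := by
    rw [← sum_indicator a (FreeMonoid.toList u)]
    exact lift_pow _ (FreeMonoid.toList u)
  have hv : FreeMonoid.lift (fun b => x ^ (if b = a then 1 else 0)) v
      = x ^ ((FreeMonoid.toList v).count a) := by
    rw [← sum_indicator a (FreeMonoid.toList v)]
    exact lift_pow _ (FreeMonoid.toList v)
  rwa [hu, hv] at hfi

lemma sum_ones (l : List ℕ) : (l.map fun _ => 1).sum = l.length := by
  induction l with
  | nil => rfl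
  | cons b l ih => rw [List.map_cons, List.sum_cons, ih, List.length_cons]; omega


/-- Let `c` be a fully invariant congruence on `F` and `n ≥ 1`.  The following
are equivalent: (a) `xⁿ` is not an isoterm for `c`; (b) `c` relates `xⁿ` and
`xⁿ⁺ᵐ` for some `m ≥ 1`; (c) `c` is not contained in
`σ_{C_{n+1}} = FIC{(xⁿ⁺², xⁿ⁺¹), (xy, yx)}`. -/
theorem isoterm_tfae (c : FICon) (n : ℕ) (hn : 1 ≤ n) :
    ((∃ w : F, w ≠ x ^ n ∧ c.1 (x ^ n) w) ↔
      (∃ m : ℕ, 1 ≤ m ∧ c.1 (x ^ n) (x ^ (n + m)))) ∧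
    ((∃ m : ℕ, 1 ≤ m ∧ c.1 (x ^ n) (x ^ (n + m))) ↔
      ¬ c ≤ fic {(x ^ (n + 2), x ^ (n + 1)), (x * y, y * x)}) := by
  constructor
  · constructor
    · rintro ⟨w, hw, hcw⟩
      have h1 : c.1 (x ^ n) (x ^ (FreeMonoid.toList w).length) := by
        have hfi := c.2 (FreeMonoid.lift (fun _ => x ^ (1:ℕ))) _ _ hcw
        have e1 : FreeMonoid.lift (fun _ : ℕ => x ^ (1:ℕ)) (x ^ n) = x ^ n := by
          have hx : FreeMonoid.lift (fun _ : ℕ => x ^ (1:ℕ)) x = x := by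
            show FreeMonoid.lift _ (FreeMonoid.of 0) = _
            rw [FreeMonoid.lift_eval_of]
            exact pow_one x
          rw [map_pow, hx]
        have e2 : FreeMonoid.lift (fun _ : ℕ => x ^ (1:ℕ)) w
            = x ^ (FreeMonoid.toList w).length := by
          rw [← sum_ones (FreeMonoid.toList w)]
          exact lift_pow _ (FreeMonoid.toList w)
        rwa [e1, e2] at hfi
      rcases Nat.lt_trichotomy (FreeMonoid.toList w).length n with hlt | heq | hgt
      · exact step c n _ n (c.1.symm h1) hlt (le_of_lt hlt)
      · -- same length: there must be a letter other than 0
        have hex : ∃ a ∈ FreeMonoid.toList w, a ≠ 0 := by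
          by_contra hcon
          push_neg at hcon
          apply hw
          have : FreeMonoid.toList w = List.replicate n 0 :=
            List.eq_replicate_iff.mpr ⟨heq, hcon⟩
          rw [x_pow_eq, ← this]
          rfl
        obtain ⟨a, hal, ha0⟩ := hex
        have h2 : c.1 (x ^ n)
            (x ^ ((FreeMonoid.toList w).length + (FreeMonoid.toList w).count a)) := by
          have hfi := c.2 (FreeMonoid.lift (fun b => x ^ (if b = a then 2 else 1))) _ _ hcw
          have e1 : FreeMonoid.lift (fun b : ℕ => x ^ (if b = a then 2 else 1)) (x ^ n)
              = x ^ n := by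
            have hx : FreeMonoid.lift (fun b : ℕ => x ^ (if b = a then 2 else 1)) x = x := by
              show FreeMonoid.lift _ (FreeMonoid.of 0) = _
              rw [FreeMonoid.lift_eval_of, if_neg (Ne.symm ha0)]
              exact pow_one x
            rw [map_pow, hx]
          have e2 : FreeMonoid.lift (fun b : ℕ => x ^ (if b = a then 2 else 1)) w
              = x ^ ((FreeMonoid.toList w).length + (FreeMonoid.toList w).count a) := by
            rw [← sum_two a (FreeMonoid.toList w)]
            exact lift_pow _ (FreeMonoid.toList w)
          rwa [e1, e2] at hfi
        have hcount : 0 < (FreeMonoid.toList w).count a := List.count_pos_iff.mpr hal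
        exact step c n n _ h2 (by omega) (le_refl n)
      · exact step c n n _ h1 hgt (le_refl n)
    · rintro ⟨m, hm, hc⟩
      refine ⟨x ^ (n + m), ?_, hc⟩
      intro h
      have h2 := congrArg List.length (congrArg FreeMonoid.toList h)
      rw [x_pow_eq, x_pow_eq] at h2
      simp only [FreeMonoid.toList_ofList, List.length_replicate] at h2
      omega
  · constructor
    · rintro ⟨m, hm, hc⟩ hle
      exact sigma_not n m hm (hle hc)
    · intro hnle
      by_contra hne
      apply hnle
      show c.1 ≤ (sig n).1
      rw [Con.le_def]
      intro u v huv
      apply sig_of_counts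
      intro a
      have hr := count_rel c u v huv a
      rcases Nat.lt_trichotomy ((FreeMonoid.toList u).count a)
        ((FreeMonoid.toList v).count a) with h | h | h
      · by_cases hpn : (FreeMonoid.toList u).count a ≤ n
        · exact absurd (step c n _ _ hr h hpn) hne
        · omega
      · rw [h]
      · by_cases hqn : (FreeMonoid.toList v).count a ≤ n
        · exact absurd (step c n _ _ (c.1.symm hr) h hqn) hne
        · omega
end

section
/- Let c be a fully invariant congruence on F such that c is noncommutative (¬ c (xy) (yx)) and not completely regular (for every n ≥ 1, ¬ c x (xⁿ⁺¹)). Then c ⊆ σ_D. (In variety language: if a monoid variety V is non-completely regular and noncommutative, then D ⊆ V.) -/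
open FreeMonoid List

/-- substitution killing letters failing `p` and renaming by `g`. -/
def sub1 (p : ℕ → Bool) (g : ℕ → ℕ) : F →* F :=
  FreeMonoid.lift (fun n => if p n then FreeMonoid.of (g n) else 1)

lemma sub1_ofList (p : ℕ → Bool) (g : ℕ → ℕ) (l : List ℕ) :
    sub1 p g (FreeMonoid.ofList l) = FreeMonoid.ofList ((l.filter p).map g) := by
  induction l with
  | nil => rfl
  | cons a l ih =>
    rw [FreeMonoid.ofList_cons, map_mul, ih, List.filter_cons]
    by_cases h : p a
    · simp [sub1, FreeMonoid.lift_eval_of, h, FreeMonoid.ofList_cons]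
    · simp [sub1, FreeMonoid.lift_eval_of, h]

lemma x_pow (n : ℕ) : (x ^ n : F) = FreeMonoid.ofList (List.replicate n 0) := by
  induction n with
  | zero => rfl
  | succ n ih => rw [pow_succ', ih, List.replicate_succ, FreeMonoid.ofList_cons]; rfl

lemma filter_beq_map_const (a c0 : ℕ) (l : List ℕ) :
    (l.filter (fun n => n == a)).map (fun _ => c0) = List.replicate (l.count a) c0 := by
  induction l with
  | nil => rfl
  | cons b l ih =>
    rw [List.filter_cons, List.count_cons]
    by_cases hb : b = a
    · simp [hb, ih, List.replicate_succ]
    · simp [hb, ih]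

section Step1'
variable {c : Con F} (hfi : IsFullyInvariant c)
    (hnc : ¬ c (x * y) (y * x))
    (hncr : ∀ n : ℕ, 1 ≤ n → ¬ c x (x ^ (n + 1)))

include hncr in
lemma pow_cap_aux {m k : ℕ} (h : c (x ^ m) (x ^ k)) (hlt : min m 2 < min k 2) : False := by
  have hm : m < 2 := by omega
  have hmeq : min m 2 = m := by omega
  interval_cases m
  · have hk : 1 ≤ k := by omega
    rw [pow_zero] at h
    have h2 : c (x * 1) (x * x ^ k) := c.mul (c.refl x) h
    rw [mul_one, ← pow_succ'] at h2
    exact hncr k hk h2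
  · have hk : 2 ≤ k := by omega
    rw [pow_one] at h
    have hkk : k - 1 + 1 = k := by omega
    exact hncr (k - 1) (by omega) (by rwa [hkk])

include hncr in
lemma pow_cap {m k : ℕ} (h : c (x ^ m) (x ^ k)) : min m 2 = min k 2 := by
  by_contra hne
  rcases lt_or_gt_of_ne hne with hlt | hlt
  · exact pow_cap_aux hncr h hlt
  · exact pow_cap_aux hncr (c.symm h) hlt
end Step1'

section Step1
variable {c : Con F} (hfi : IsFullyInvariant c)
    (hnc : ¬ c (x * y) (y * x))
    (hncr : ∀ n : ℕ, 1 ≤ n → ¬ c x (x ^ (n + 1)))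

lemma sub1_count (a : ℕ) (w : F) :
    sub1 (fun n => n == a) (fun _ => 0) w = x ^ (w.toList.count a) := by
  conv_lhs => rw [← FreeMonoid.ofList_toList w]
  rw [sub1_ofList, x_pow, filter_beq_map_const]

include hfi hncr in
lemma count_cap {u v : F} (h : c u v) (a : ℕ) :
    min (u.toList.count a) 2 = min (v.toList.count a) 2 := by
  have h2 := hfi (sub1 (fun n => n == a) (fun _ => 0)) u v h
  rw [sub1_count, sub1_count] at h2
  exact pow_cap hncr h2

lemma sub1_apply (p : ℕ → Bool) (g : ℕ → ℕ) (w : F) :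
    sub1 p g w = FreeMonoid.ofList ((w.toList.filter p).map g) := by
  conv_lhs => rw [← FreeMonoid.ofList_toList w]
  rw [sub1_ofList]

/-- the linear part: letters occurring exactly once, in order. -/
def linL (l : List ℕ) : List ℕ := l.filter (fun b => l.count b == 1)

include hfi in
lemma c_lin {u v : F} (h : c u v)
    (hcap : ∀ a, min (u.toList.count a) 2 = min (v.toList.count a) 2) :
    c (FreeMonoid.ofList (linL u.toList)) (FreeMonoid.ofList (linL v.toList)) := by
  have h2 := hfi (sub1 (fun n => u.toList.count n == 1) id) u v h
  rw [sub1_apply, sub1_apply, List.map_id, List.map_id] at h2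
  have e2 : (v.toList.filter (fun n => u.toList.count n == 1)) = linL v.toList := by
    apply List.filter_congr
    intro b _
    have := hcap b
    have : u.toList.count b = 1 ↔ v.toList.count b = 1 := by omega
    simp [this]
  rw [e2] at h2
  exact h2
end Step1

lemma first_diff : ∀ (L1 L2 : List ℕ), L1.Nodup → L2.Nodup → (∀ b, b ∈ L1 ↔ b ∈ L2) →
    L1 ≠ L2 → ∃ a b p q r, a ≠ b ∧ L1 = p ++ a :: q ∧ L2 = p ++ b :: r ∧
      a ∉ p ∧ b ∉ p ∧ b ∈ q ∧ a ∈ r := by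
  intro L1
  induction L1 with
  | nil =>
    intro L2 _ _ hmem hne
    exact absurd (List.eq_nil_iff_forall_not_mem.2 fun b hb => by
      simpa using (hmem b).2 hb).symm hne
  | cons a L1 ih =>
    intro L2 h1 h2 hmem hne
    cases L2 with
    | nil => exact absurd ((hmem a).1 (List.mem_cons_self (a := a) (l := L1))) (by simp)
    | cons b L2 =>
      by_cases hab : a = b
      · subst hab
        have h1' := h1
        rw [List.nodup_cons] at h1 h2
        have hmem' : ∀ c, c ∈ L1 ↔ c ∈ L2 := by
          intro c
          constructor
          · intro hc
            rcases List.mem_cons.1 ((hmem c).1 (List.mem_cons_of_mem _ hc)) with h | h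
            · exact absurd (h ▸ hc) h1.1
            · exact h
          · intro hc
            rcases List.mem_cons.1 ((hmem c).2 (List.mem_cons_of_mem _ hc)) with h | h
            · exact absurd (h ▸ hc) h2.1
            · exact h
        have hne' : L1 ≠ L2 := fun h => hne (by rw [h])
        obtain ⟨a', b', p, q, r, hab', e1, e2, hap, hbp, hbq, har⟩ :=
          ih L2 h1.2 h2.2 hmem' hne'
        refine ⟨a', b', a :: p, q, r, hab', by rw [e1]; rfl, by rw [e2]; rfl, ?_, ?_, hbq, har⟩
        · simp only [List.mem_cons]
          rintro (h | h)
          · exact h1.1 (h ▸ (e1 ▸ (List.mem_append_right p (List.mem_cons_self (a := a') (l := q)))))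
          · exact hap h
        · simp only [List.mem_cons]
          rintro (h | h)
          · exact h2.1 (h ▸ (e2 ▸ (List.mem_append_right p (List.mem_cons_self (a := b') (l := r)))))
          · exact hbp h
      · refine ⟨a, b, [], L1, L2, hab, rfl, rfl, by simp, by simp, ?_, ?_⟩
        · rcases List.mem_cons.1 ((hmem b).2 (List.mem_cons_self (a := b) (l := L2))) with h | h
          · exact absurd h.symm hab
          · exact h
        · rcases List.mem_cons.1 ((hmem a).1 (List.mem_cons_self (a := a) (l := L1))) with h | h
          · exact absurd h hab
          · exact h

lemma filter_pair {a b : ℕ} (q : List ℕ) (hnd : q.Nodup) (ha : a ∉ q) (hb : b ∈ q) :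
    q.filter (fun n => n == a || n == b) = [b] := by
  have h1 : q.filter (fun n => n == a || n == b) = q.filter (fun n => n == b) :=
    List.filter_congr (fun x hx => by
      have : x ≠ a := fun h => ha (h ▸ hx)
      simp [beq_false_of_ne this])
  rw [h1, List.filter_beq, List.count_eq_one_of_mem hnd hb]
  rfl

lemma filter_pair2 {a b : ℕ} (r : List ℕ) (hnd : r.Nodup) (hb : b ∉ r) (ha : a ∈ r) :
    r.filter (fun n => n == a || n == b) = [a] := by
  have h1 : r.filter (fun n => n == a || n == b) = r.filter (fun n => n == a) :=
    List.filter_congr (fun x hx => by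
      have : x ≠ b := fun h => hb (h ▸ hx)
      simp [beq_false_of_ne this])
  rw [h1, List.filter_beq, List.count_eq_one_of_mem hnd ha]
  rfl

lemma filter_pair_nil {a b : ℕ} (p : List ℕ) (ha : a ∉ p) (hb : b ∉ p) :
    p.filter (fun n => n == a || n == b) = [] := by
  rw [List.filter_eq_nil_iff]
  intro x hx
  have h1 : x ≠ a := fun h => ha (h ▸ hx)
  have h2 : x ≠ b := fun h => hb (h ▸ hx)
  simp [h1, h2]

lemma linL_nodup (l : List ℕ) : (linL l).Nodup := by
  rw [List.nodup_iff_count_le_one]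
  intro b
  by_cases hb : l.count b = 1
  · calc List.count b (linL l) ≤ List.count b l := List.filter_sublist.count_le _
      _ ≤ 1 := le_of_eq hb
  · have : b ∉ linL l := by
      intro hmem
      rw [linL, List.mem_filter, beq_iff_eq] at hmem
      exact hb hmem.2
    rw [List.count_eq_zero.2 this]
    omega

lemma linL_mem (l : List ℕ) (b : ℕ) : b ∈ linL l ↔ l.count b = 1 := by
  rw [linL, List.mem_filter, beq_iff_eq]
  exact ⟨fun h => h.2, fun h => ⟨List.count_pos_iff.1 (by omega), h⟩⟩

section Step1b
variable {c : Con F} (hfi : IsFullyInvariant c)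
    (hnc : ¬ c (x * y) (y * x))

include hfi hnc in
lemma lin_eq {u v : F} (h : c u v)
    (hcap : ∀ a, min (u.toList.count a) 2 = min (v.toList.count a) 2) :
    linL u.toList = linL v.toList := by
  by_contra hne
  have hmem : ∀ b, b ∈ linL u.toList ↔ b ∈ linL v.toList := by
    intro b
    rw [linL_mem, linL_mem]
    have := hcap b
    omega
  obtain ⟨a, b, p, q, r, hab, e1, e2, hap, hbp, hbq, har⟩ :=
    first_diff _ _ (linL_nodup u.toList) (linL_nodup v.toList) hmem hne
  -- nodup facts
  have hnd1 := linL_nodup u.toList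
  have hnd2 := linL_nodup v.toList
  rw [e1, List.nodup_append] at hnd1
  rw [e2, List.nodup_append] at hnd2
  have haq : a ∉ q := (List.nodup_cons.1 hnd1.2.1).1
  have hqnd : q.Nodup := (List.nodup_cons.1 hnd1.2.1).2
  have hbr : b ∉ r := (List.nodup_cons.1 hnd2.2.1).1
  have hrnd : r.Nodup := (List.nodup_cons.1 hnd2.2.1).2
  have hclin := c_lin hfi h hcap
  have h3 := hfi (sub1 (fun n => n == a || n == b) (fun n => if n = a then 0 else 1)) _ _ hclin
  rw [sub1_ofList, sub1_ofList, e1, e2, List.filter_append, List.filter_append,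
    List.filter_cons, List.filter_cons] at h3
  rw [filter_pair_nil p hap hbp, filter_pair q hqnd haq hbq,
    filter_pair2 r hrnd hbr har] at h3
  simp only [beq_self_eq_true, Bool.true_or, Bool.or_true, if_true,
    List.nil_append, List.map_cons, List.map_nil, if_pos rfl,
    if_neg (Ne.symm hab)] at h3
  exact hnc h3
end Step1b

section Step2
variable {d : Con F} (hd : IsFullyInvariant d)
    (g1 : d (x ^ 3) (x ^ 2)) (g2 : d (x ^ 2 * y) (x * y * x)) (g3 : d (x * y * x) (y * x ^ 2))

/-- substitution x ↦ u, everything else ↦ w -/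
def sub2 (u w : F) : F →* F := FreeMonoid.lift (fun n => if n = 0 then u else w)

include hd g3 in
lemma rel_xyx (u w : F) : d (u * w * u) (w * (u * u)) := by
  have h := hd (sub2 u w) _ _ g3
  simpa [sub2, x, y, FreeMonoid.lift_eval_of, pow_two] using h

include hd g2 g3 in
lemma rel_center (u w : F) : d (u * u * w) (w * (u * u)) := by
  have h := hd (sub2 u w) _ _ g2
  simp only [sub2, map_mul, map_pow, FreeMonoid.lift_eval_of, x, y] at h
  simp only [if_pos rfl, if_neg (one_ne_zero), pow_two] at h
  exact d.trans h (rel_xyx hd g3 u w)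

include hd g1 in
lemma rel_cube (u : F) : d (u * u * u) (u * u) := by
  have h := hd (sub2 u 1) _ _ g1
  simp only [sub2, map_pow, FreeMonoid.lift_eval_of, x, if_pos rfl] at h
  simpa [pow_succ, pow_two, mul_assoc] using h

lemma mulL {u v : F} (p : F) (h : d u v) : d (p * u) (p * v) := d.mul (d.refl p) h
lemma mulR {u v : F} (p : F) (h : d u v) : d (u * p) (v * p) := d.mul h (d.refl p)

include hd g1 in
lemma powsq (u : F) (k : ℕ) (hk : 2 ≤ k) : d (u ^ k) (u ^ 2) := by
  induction k, hk using Nat.le_induction with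
  | base => exact d.refl _
  | succ k hk ih =>
    have h1 : d (u ^ (k + 1)) (u ^ 2 * u) := by rw [pow_succ]; exact mulR u ih
    refine d.trans h1 ?_
    have := rel_cube hd g1 u
    rw [pow_two]
    exact this

end Step2

lemma first_split {a : ℕ} : ∀ {s : List ℕ}, a ∈ s → ∃ m r, s = m ++ a :: r ∧ a ∉ m := by
  intro s hs
  induction s with
  | nil => cases hs
  | cons b s ih =>
    by_cases hb : b = a
    · exact ⟨[], s, by rw [hb]; rfl, by simp⟩
    · have has : a ∈ s := by
        rcases List.mem_cons.1 hs with h | h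
        · exact absurd h.symm hb
        · exact h
      obtain ⟨m, r, h1, h2⟩ := ih has
      exact ⟨b :: m, r, by rw [h1]; rfl, by simp only [List.mem_cons, not_or]; exact ⟨fun h => hb h.symm, h2⟩⟩

section Step2b
variable {d : Con F} (hd : IsFullyInvariant d)
    (g1 : d (x ^ 3) (x ^ 2)) (g2 : d (x ^ 2 * y) (x * y * x)) (g3 : d (x * y * x) (y * x ^ 2))

include hd g2 g3 in
theorem aStep (a : ℕ) (s : List ℕ) (hs : 1 ≤ s.count a) :
    d (FreeMonoid.of a * FreeMonoid.ofList s)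
      (FreeMonoid.ofList (s.filter (fun n => n != a)) * (FreeMonoid.of a) ^ (s.count a + 1)) := by
  obtain ⟨m, r, hsp, hm⟩ := first_split (List.count_pos_iff.1 hs)
  subst hsp
  have hcm : m.count a = 0 := List.count_eq_zero.2 hm
  have hcs : (m ++ a :: r).count a = r.count a + 1 := by
    simp [List.count_append, List.count_cons, hcm]
  have hfm : m.filter (fun n => n != a) = m :=
    List.filter_eq_self.2 (fun b hb => by
      simp only [bne_iff_ne, ne_eq, decide_eq_true_eq]
      exact fun h => hm (h ▸ hb))
  have hff : (m ++ a :: r).filter (fun n => n != a) = m ++ r.filter (fun n => n != a) := by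
    rw [List.filter_append, hfm, List.filter_cons, if_neg (by simp)]
  rw [hcs, hff]
  have step1 : d (FreeMonoid.of a * FreeMonoid.ofList m * FreeMonoid.of a)
      (FreeMonoid.ofList m * (FreeMonoid.of a * FreeMonoid.of a)) :=
    rel_xyx hd g3 _ _
  have step1' := mulR (d := d) (FreeMonoid.ofList r) step1
  by_cases hc : r.count a = 0
  · -- exactly one occurrence of a in s
    have hfr : r.filter (fun n => n != a) = r :=
      List.filter_eq_self.2 (fun b hb => by
        simp only [bne_iff_ne, ne_eq, decide_eq_true_eq]
        exact fun h => (List.count_eq_zero.1 hc) (h ▸ hb))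
    rw [hc, hfr]
    have step2 : d (FreeMonoid.of a * FreeMonoid.of a * FreeMonoid.ofList r)
        (FreeMonoid.ofList r * (FreeMonoid.of a * FreeMonoid.of a)) :=
      rel_center hd g2 g3 _ _
    have step2' := mulL (d := d) (FreeMonoid.ofList m) step2
    have h12 := d.trans (by simpa only [mul_assoc] using step1')
      (by simpa only [mul_assoc] using step2')
    simp only [FreeMonoid.ofList_append, FreeMonoid.ofList_cons, mul_assoc,
      pow_succ', pow_zero, mul_one]
    simpa only [mul_assoc] using h12
  · have hc1 : 1 ≤ r.count a := by omega
    have IH := aStep a r hc1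
    have step2' := mulL (d := d) (FreeMonoid.ofList m) (mulL (d := d) (FreeMonoid.of a) IH)
    have step3 : d (FreeMonoid.of a * FreeMonoid.ofList (r.filter (fun n => n != a)) * FreeMonoid.of a)
        (FreeMonoid.ofList (r.filter (fun n => n != a)) * (FreeMonoid.of a * FreeMonoid.of a)) :=
      rel_xyx hd g3 _ _
    have step3' := mulL (d := d) (FreeMonoid.ofList m)
      (mulR (d := d) ((FreeMonoid.of a) ^ (r.count a)) step3)
    have h12 := d.trans (by simpa only [mul_assoc] using step1')
      (by simpa only [mul_assoc, pow_succ'] using step2')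
    have h123 := d.trans h12 (by simpa only [mul_assoc, pow_succ'] using step3')
    simp only [FreeMonoid.ofList_append, FreeMonoid.ofList_cons, mul_assoc, pow_succ']
    simpa only [mul_assoc] using h123
termination_by s.length
decreasing_by rw [hsp]; simp only [List.length_append, List.length_cons]; omega

end Step2b

section Step2c
variable {d : Con F} (hd : IsFullyInvariant d)
    (g1 : d (x ^ 3) (x ^ 2)) (g2 : d (x ^ 2 * y) (x * y * x)) (g3 : d (x * y * x) (y * x ^ 2))

include hd g1 g2 g3 in
theorem bLem (a : ℕ) (s : List ℕ) (hs : 2 ≤ s.count a) :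
    d (FreeMonoid.ofList s)
      (FreeMonoid.ofList (s.filter (fun n => n != a)) * (FreeMonoid.of a) ^ 2) := by
  obtain ⟨m, r, hsp, hm⟩ := first_split (List.count_pos_iff.1 (lt_of_lt_of_le (by norm_num) hs))
  subst hsp
  have hcm : m.count a = 0 := List.count_eq_zero.2 hm
  have hcr : 1 ≤ r.count a := by
    have : (m ++ a :: r).count a = r.count a + 1 := by
      simp [List.count_append, List.count_cons, hcm]
    omega
  have hfm : m.filter (fun n => n != a) = m :=
    List.filter_eq_self.2 (fun b hb => by
      simp only [bne_iff_ne, ne_eq, decide_eq_true_eq]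
      exact fun h => hm (h ▸ hb))
  have hff : (m ++ a :: r).filter (fun n => n != a) = m ++ r.filter (fun n => n != a) := by
    rw [List.filter_append, hfm, List.filter_cons, if_neg (by simp)]
  rw [hff]
  have IH := aStep hd g2 g3 a r hcr
  have step1 := mulL (d := d) (FreeMonoid.ofList m) IH
  have step2 := mulL (d := d) (FreeMonoid.ofList m)
    (mulL (d := d) (FreeMonoid.ofList (r.filter (fun n => n != a)))
      (powsq hd g1 (FreeMonoid.of a) (r.count a + 1) (by omega)))
  have h12 := d.trans (by simpa only [mul_assoc] using step1)
    (by simpa only [mul_assoc] using step2)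
  simp only [FreeMonoid.ofList_append, FreeMonoid.ofList_cons, mul_assoc]
  simpa only [mul_assoc] using h12

include hd g1 g2 g3 in
theorem nfLem : ∀ (L : List ℕ) (s : List ℕ), L.Nodup → (∀ b, b ∈ L ↔ 2 ≤ s.count b) →
    d (FreeMonoid.ofList s)
      (FreeMonoid.ofList (linL s) * FreeMonoid.ofList (L.flatMap (fun a => [a, a]))) := by
  intro L
  induction L with
  | nil =>
    intro s _ hmem
    have hls : linL s = s := List.filter_eq_self.2 (fun b hb => by
      have h1 : 0 < s.count b := List.count_pos_iff.2 hb
      have h2 : ¬ 2 ≤ s.count b := fun h => by simpa using (hmem b).2 h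
      simp only [beq_iff_eq]
      omega)
    rw [linL] at hls
    rw [linL, hls]
    show d (FreeMonoid.ofList s) (FreeMonoid.ofList s * FreeMonoid.ofList [])
    rw [FreeMonoid.ofList_nil, mul_one]
    exact d.refl _
  | cons a L ih =>
    intro s hnd hmem
    have ha : 2 ≤ s.count a := (hmem a).1 (List.mem_cons_self (a := a) (l := L))
    have hstep := bLem hd g1 g2 g3 a s ha
    set s' := s.filter (fun n => n != a) with hs'
    have hcount : ∀ b, b ≠ a → s'.count b = s.count b := fun b hb =>
      List.count_filter (by simp [bne_iff_ne, hb])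
    have hcnta : s'.count a = 0 := List.count_eq_zero.2 (by simp [hs', List.mem_filter])
    have hndL : L.Nodup := (List.nodup_cons.1 hnd).2
    have haL : a ∉ L := (List.nodup_cons.1 hnd).1
    have hmem' : ∀ b, b ∈ L ↔ 2 ≤ s'.count b := by
      intro b
      by_cases hb : b = a
      · subst hb
        simp [haL, hcnta]
      · rw [hcount b hb]
        constructor
        · intro h; exact (hmem b).1 (List.mem_cons_of_mem _ h)
        · intro h
          rcases List.mem_cons.1 ((hmem b).2 h) with h' | h'
          · exact absurd h' hb
          · exact h'
    have hlin : linL s' = linL s := by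
      rw [linL, linL, hs', List.filter_filter]
      apply List.filter_congr
      intro b hb
      by_cases hba : b = a
      · subst hba
        have h1 : s.count b ≠ 1 := by omega
        simp [h1]
      · rw [← hs', hcount b hba]
        simp [bne_iff_ne, hba]
    have IH := ih s' hndL hmem'
    rw [hlin] at IH
    have step2 := mulR (d := d) ((FreeMonoid.of a) ^ 2) IH
    have step3 : d ((FreeMonoid.ofList (L.flatMap (fun a => [a, a]))) *
          (FreeMonoid.of a * FreeMonoid.of a))
        (FreeMonoid.of a * FreeMonoid.of a * FreeMonoid.ofList (L.flatMap (fun a => [a, a]))) :=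
      d.symm (rel_center hd g2 g3 _ _)
    have step3' := mulL (d := d) (FreeMonoid.ofList (linL s)) step3
    have h23 := d.trans (by simpa only [mul_assoc, pow_two] using step2)
      (by simpa only [mul_assoc] using step3')
    have h123 := d.trans (by simpa only [mul_assoc, pow_two] using hstep) h23
    have hfl : (a :: L).flatMap (fun a => [a, a]) = a :: a :: L.flatMap (fun a => [a, a]) := rfl
    rw [hfl]
    simp only [FreeMonoid.ofList_cons, mul_assoc]
    simpa only [mul_assoc] using h123

end Step2c


/-- If a fully invariant congruence `c` on `F` is noncommutative and not
completely regular, then `c ⊆ σ_D`.  (In variety language: every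
non-completely regular noncommutative monoid variety contains `D`.) -/
theorem le_sigmaD_of_noncommutative_noncr (c : FICon)
    (hnc : ¬ c.1 (x * y) (y * x))
    (hncr : ∀ n : ℕ, 1 ≤ n → ¬ c.1 x (x ^ (n + 1))) :
    c ≤ sigmaD := by
  rw [sigmaD, fic]
  apply le_sInf
  rintro d hd
  have g1 : d.1 (x ^ 3) (x ^ 2) := hd (x ^ 3, x ^ 2) (by simp)
  have g2 : d.1 (x ^ 2 * y) (x * y * x) := hd (x ^ 2 * y, x * y * x) (by simp)
  have g3 : d.1 (x * y * x) (y * x ^ 2) := hd (x * y * x, y * x ^ 2) (by simp)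
  show c.1 ≤ d.1
  rw [Con.le_def]
  intro u v huv
  have hcap : ∀ a, min (u.toList.count a) 2 = min (v.toList.count a) 2 :=
    count_cap c.2 hncr huv
  have hlin : linL u.toList = linL v.toList := lin_eq c.2 hnc huv hcap
  set L := u.toList.dedup.filter (fun b => 2 ≤ u.toList.count b) with hL
  have hLn : L.Nodup := (u.toList.nodup_dedup).filter _
  have hLu : ∀ b, b ∈ L ↔ 2 ≤ u.toList.count b := by
    intro b
    rw [hL, List.mem_filter, List.mem_dedup, decide_eq_true_eq]
    exact ⟨fun h => h.2, fun h => ⟨List.count_pos_iff.1 (by omega), h⟩⟩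
  have hLv : ∀ b, b ∈ L ↔ 2 ≤ v.toList.count b := by
    intro b
    rw [hLu b]
    have := hcap b
    omega
  have h1 := nfLem d.2 g1 g2 g3 L u.toList hLn hLu
  have h2 := nfLem d.2 g1 g2 g3 L v.toList hLn hLv
  rw [FreeMonoid.ofList_toList] at h1 h2
  rw [hlin] at h1
  exact d.1.trans h1 (d.1.symm h2)
end
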